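/- arXiv:2308.14901 — 4 statements merged into one kernel-verified Lean document; each statement's English description precedes it below -/
import Mathlib

section
/- Let u and v be finite words with |v| < |u|, and let s be the maximal common suffix of the left-infinite words v^∞ and v^∞u. If |s| ≥ |vu|, then u and v are both powers of a common word. -/
/-- `wordPow v n` is the word `v` repeated `n` times. -/
def wordPow {A : Type*} (v : List A) (n : ℕ) : List A := (List.replicate n v).flatten


lemma length_wordPow {A : Type*} (v : List A) (n : ℕ) :
    (wordPow v n).length = n * v.length := by simp [wordPow]

lemma wordPow_succ {A : Type*} (v : List A) (n : ℕ) :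
    wordPow v (n + 1) = v ++ wordPow v n := by
  simp [wordPow, List.replicate_succ]

lemma wordPow_append_self {A : Type*} (v : List A) (n : ℕ) :
    wordPow v n ++ v = v ++ wordPow v n := by
  induction n with
  | zero => simp [wordPow]
  | succ n ih => rw [wordPow_succ, List.append_assoc, ih]

lemma reverse_wordPow {A : Type*} (v : List A) (n : ℕ) :
    (wordPow v n).reverse = wordPow v.reverse n := by
  induction n with
  | zero => simp [wordPow]
  | succ n ih =>
      rw [wordPow_succ, List.reverse_append, ih, wordPow_succ, ← wordPow_append_self]

lemma getElem_wordPow {A : Type*} (v : List A) (n i : ℕ) (h : i < (wordPow v n).length)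
    (h2 : i % v.length < v.length) :
    (wordPow v n)[i] = v[i % v.length] := by
  induction n generalizing i with
  | zero => simp [wordPow] at h
  | succ n ih =>
      simp only [wordPow_succ] at h ⊢
      rcases lt_or_ge i v.length with hi | hi
      · rw [List.getElem_append_left hi]
        congr 1
        exact (Nat.mod_eq_of_lt hi).symm
      · rw [List.getElem_append_right hi]
        have h' : i - v.length < (wordPow v n).length := by
          simp only [List.length_append] at h; omega
        rw [ih _ h' (Nat.mod_lt _ (by omega))]
        congr 1
        have hv : 0 < v.length := by omega
        conv_rhs => rw [show i = (i - v.length) + v.length from by omega]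
        rw [Nat.add_mod_right]

lemma periodic_mul {A : Type*} (f : ℕ → A) (p : ℕ) (hp : ∀ i, f (i + p) = f i) :
    ∀ k i, f (i + p * k) = f i := by
  intro k
  induction k with
  | zero => simp
  | succ k ih => intro i; rw [Nat.mul_succ, ← Nat.add_assoc, hp (i + p * k), ih]

lemma periodic_gcd {A : Type*} (f : ℕ → A) :
    ∀ p q : ℕ, (∀ i, f (i + p) = f i) → (∀ i, f (i + q) = f i) →
    ∀ i, f (i + Nat.gcd p q) = f i := by
  intro p
  induction p using Nat.strong_induction_on with
  | _ p ih =>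
      intro q hp hq i
      rcases Nat.eq_zero_or_pos p with h0 | h0
      · subst h0; simpa using hq i
      · rw [Nat.gcd_rec]
        refine ih (q % p) (Nat.mod_lt _ h0) p ?_ hp i
        intro j
        have : f (j + q % p + p * (q / p)) = f (j + q % p) := periodic_mul f p hp _ _
        rw [Nat.add_assoc, Nat.mod_add_div] at this
        rw [← this, hq]

/-- If `|v| < |u|` and the maximal common suffix `s` of the left-infinite words `v^∞` and `v^∞u`
satisfies `|s| ≥ |vu|`, then `u` and `v` are both powers of a common word. -/
theorem stmt1 {A : Type*} (u v s : List A) (hv : v ≠ []) (hu : u ≠ [])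
    (hlen : v.length < u.length)
    (hs1 : ∃ n : ℕ, s <:+ wordPow v n)
    (hs2 : ∃ n : ℕ, s <:+ wordPow v n ++ u)
    (hmax : ∀ s' : List A, (∃ n : ℕ, s' <:+ wordPow v n) →
      (∃ n : ℕ, s' <:+ wordPow v n ++ u) → s'.length ≤ s.length)
    (hbig : v.length + u.length ≤ s.length) :
    ∃ (t : List A) (m m' : ℕ), 1 ≤ m ∧ 1 ≤ m' ∧ u = wordPow t m ∧ v = wordPow t m' := by
  obtain ⟨n, hn⟩ := hs1
  obtain ⟨N, hN⟩ := hs2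
  have hVpos : 0 < v.reverse.length := by simpa using List.length_pos_iff.mpr hv
  have hupos : 0 < u.length := List.length_pos_iff.mpr hu
  set V := v.reverse with hVdef
  set U := u.reverse with hUdef
  set S := s.reverse with hSdef
  have hVlen : V.length = v.length := by simp [hVdef]
  have hSlen : S.length = s.length := by simp [hSdef]
  have hUlen : U.length = u.length := by simp [hUdef]
  have h1 : S <+: wordPow V n := by
    rw [← reverse_wordPow]; exact List.reverse_prefix.mpr hn
  have h2 : S <+: U ++ wordPow V N := by
    have := List.reverse_prefix.mpr hN
    rwa [List.reverse_append, reverse_wordPow] at this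
  set f : ℕ → A := fun i => V[i % V.length]'(Nat.mod_lt _ hVpos) with hfdef
  -- letters of S are given by f
  have ha : ∀ i (hi : i < S.length), S[i] = f i := by
    intro i hi
    rw [h1.getElem hi, getElem_wordPow V n i (hi.trans_le h1.length_le) (Nat.mod_lt _ hVpos)]
  -- letters of U are given by f
  have hUget : ∀ i (hi : i < U.length), U[i] = f i := by
    intro i hi
    have hiS : i < S.length := by omega
    have := h2.getElem hiS
    rw [List.getElem_append_left hi] at this
    rw [← this, ha i hiS]
  -- shifted periodicity
  have hshift : ∀ j, j < s.length - u.length → f (j + u.length) = f j := by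
    intro j hj
    have hiS : j + u.length < S.length := by omega
    have h3 := h2.getElem hiS
    rw [List.getElem_append_right (by omega : U.length ≤ j + u.length)] at h3
    have hjlt : j + u.length - U.length < (wordPow V N).length := by
      have := hiS.trans_le h2.length_le
      simp only [List.length_append] at this; omega
    rw [getElem_wordPow V N _ hjlt (Nat.mod_lt _ hVpos)] at h3
    rw [ha _ hiS] at h3
    have hje : j + u.length - U.length = j := by omega
    rw [h3, hje]
  have hModV : ∀ i, f i = f (i % v.length) := by
    intro i
    simp only [hfdef, hVlen]
    congr 1
    exact (Nat.mod_mod_of_dvd i dvd_rfl).symm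
  have hvper : ∀ i, f (i + v.length) = f i := by
    intro i
    rw [hModV (i + v.length), hModV i, Nat.add_mod_right]
  have huper : ∀ i, f (i + u.length) = f i := by
    intro i
    have hd := Nat.mod_add_div i v.length
    have e1 : f (i + u.length) = f (i % v.length + u.length) := by
      rw [show i + u.length = i % v.length + u.length + v.length * (i / v.length) from by omega]
      exact periodic_mul f v.length hvper _ _
    have h5 : i % v.length < v.length := Nat.mod_lt _ (by omega)
    have h6 : i % v.length < s.length - u.length := by omega
    rw [e1, hshift _ h6, ← hModV]
  set g := Nat.gcd u.length v.length with hgdef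
  have hgpos : 0 < g := Nat.gcd_pos_of_pos_right _ (by omega)
  have hg : ∀ i, f (i + g) = f i := periodic_gcd f _ _ huper hvper
  have hModG : ∀ i, f i = f (i % g) := by
    intro i
    have h := periodic_mul f g hg (i / g) (i % g)
    rwa [Nat.mod_add_div] at h
  set T : List A := List.ofFn (fun j : Fin g => f j) with hTdef
  have hTlen : T.length = g := by simp [hTdef]
  have key : ∀ (w : List A), (∀ i (hi : i < w.length), w[i] = f i) → g ∣ w.length →
      w = wordPow T (w.length / g) := by
    intro w hw hdvd
    have hlen2 : (wordPow T (w.length / g)).length = w.length := by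
      rw [length_wordPow, hTlen, Nat.div_mul_cancel hdvd]
    apply List.ext_getElem hlen2.symm
    intro i hi1 hi2
    rw [hw i hi1, getElem_wordPow T _ i hi2 (Nat.mod_lt _ (by omega))]
    simp only [hTdef, List.getElem_ofFn, List.length_ofFn]
    exact hModG i
  have hUw : U = wordPow T (u.length / g) := by
    have := key U (fun i hi => hUget i hi) (by rw [hUlen]; exact Nat.gcd_dvd_left _ _)
    rwa [hUlen] at this
  have hVget : ∀ i (hi : i < V.length), V[i] = f i := by
    intro i hi
    simp only [hfdef]
    congr 1
    exact (Nat.mod_eq_of_lt hi).symm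
  have hVw : V = wordPow T (v.length / g) := by
    have := key V (fun i hi => hVget i hi) (by rw [hVlen]; exact Nat.gcd_dvd_right _ _)
    rwa [hVlen] at this
  refine ⟨T.reverse, u.length / g, v.length / g, ?_, ?_, ?_, ?_⟩
  · exact (Nat.one_le_div_iff hgpos).mpr (Nat.le_of_dvd hupos (Nat.gcd_dvd_left _ _))
  · exact (Nat.one_le_div_iff hgpos).mpr (Nat.le_of_dvd (by omega) (Nat.gcd_dvd_right _ _))
  · rw [← reverse_wordPow, ← hUw, hUdef, List.reverse_reverse]
  · rw [← reverse_wordPow, ← hVw, hVdef, List.reverse_reverse]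
end

section
/- Let λ be a positive real number admitting the generalized continued fraction expansion λ = a_0/(b_0 + a_1/(b_1 + ⋯)) where (a_k), (b_k) are sequences of positive integers, i.e., the sequence λ_k defined by λ_k = a_k/(b_k + λ_{k+1}) with all λ_k ∈ (0, ∞), λ = λ_0. Suppose moreover there exist positive integers v_k with v_{k+1} = b_k v_k + a_k v_{k-1} and ε_k → 0 such that (a_0 ⋯ a_k)/v_{k+1} ≤ ε_k for all k. Then λ is irrational. -/
/-- A positive real admitting a generalized continued fraction expansion
`λ_k = a_k/(b_k + λ_{k+1})` with positive integer partial quotients, together with positive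
integers `v_k` satisfying `v_{k+1} = b_k v_k + a_k v_{k-1}` and
`(a_0 ⋯ a_k)/v_{k+1} ≤ ε_k → 0`, is irrational. -/
theorem stmt10 (a b : ℕ → ℕ) (ha : ∀ k, 0 < a k) (hb : ∀ k, 0 < b k)
    (lam : ℕ → ℝ) (hlampos : ∀ k, 0 < lam k)
    (hlam : ∀ k : ℕ, lam k = (a k : ℝ) / ((b k : ℝ) + lam (k + 1)))
    (v : ℕ → ℕ) (hvpos : ∀ k, 0 < v k)
    (hv : ∀ k : ℕ, 1 ≤ k → v (k + 1) = b k * v k + a k * v (k - 1))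
    (ε : ℕ → ℝ) (hε : Filter.Tendsto ε Filter.atTop (nhds 0))
    (hbound : ∀ k : ℕ, (∏ j ∈ Finset.range (k + 1), (a j : ℝ)) / (v (k + 1) : ℝ) ≤ ε k) :
    Irrational (lam 0) := by
  set L : ℕ → ℝ := fun k => ∏ j ∈ Finset.range (k + 1), lam j with hLdef
  have hLsucc : ∀ k, L (k + 1) = L k * lam (k + 1) := by
    intro k; simp [hLdef, Finset.prod_range_succ]
  have hbpos : ∀ k, (0 : ℝ) < (b k : ℝ) + lam (k + 1) := fun k =>
    add_pos (by exact_mod_cast hb k) (hlampos (k + 1))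
  have key : ∀ k, lam k * ((b k : ℝ) + lam (k + 1)) = a k := by
    intro k
    rw [hlam k, div_mul_cancel₀]
    exact (hbpos k).ne'
  have hLpos : ∀ k, 0 < L k := fun k => Finset.prod_pos (fun j _ => hlampos j)
  -- the auxiliary sequence t
  set t : ℕ → ℝ := fun k => (v (k + 1) : ℝ) + lam (k + 1) * (v k : ℝ) with htdef
  have htpos : ∀ k, 0 < t k := fun k =>
    add_pos (by exact_mod_cast hvpos (k + 1)) (mul_pos (hlampos (k + 1)) (by exact_mod_cast hvpos k))
  have htge : ∀ k, (v (k + 1) : ℝ) ≤ t k := by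
    intro k
    have : 0 ≤ lam (k + 1) * (v k : ℝ) :=
      le_of_lt (mul_pos (hlampos (k + 1)) (by exact_mod_cast hvpos k))
    simp only [htdef]; linarith
  have htstep : ∀ k, t (k + 1) = ((b (k + 1) : ℝ) + lam (k + 2)) * t k := by
    intro k
    have hv' : (v (k + 2) : ℝ) = (b (k + 1) : ℝ) * v (k + 1) + (a (k + 1) : ℝ) * v k := by
      have := hv (k + 1) (by omega)
      simp only [Nat.add_sub_cancel] at this
      exact_mod_cast this
    simp only [htdef]
    rw [hv']
    linear_combination (-(v k : ℝ)) * key (k + 1)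
  -- the product identity
  have hid : ∀ k, t k * L k * (a 0 : ℝ) =
      t 0 * lam 0 * ∏ j ∈ Finset.range (k + 1), (a j : ℝ) := by
    intro k
    induction k with
    | zero => simp [hLdef]
    | succ k ih =>
      rw [hLsucc k, htstep k, Finset.prod_range_succ]
      linear_combination (t k * L k * (a 0 : ℝ)) * key (k + 1) + (a (k + 1) : ℝ) * ih
  -- upper bound: L k ≤ C * ε k
  set C : ℝ := t 0 * lam 0 / (a 0 : ℝ) with hCdef
  have hCpos : 0 < C := by
    apply div_pos (mul_pos (htpos 0) (hlampos 0))
    exact_mod_cast ha 0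
  have hupper : ∀ k, L k ≤ C * ε k := by
    intro k
    have ha0 : (0 : ℝ) < (a 0 : ℝ) := by exact_mod_cast ha 0
    have hPa : (0 : ℝ) ≤ ∏ j ∈ Finset.range (k + 1), (a j : ℝ) :=
      Finset.prod_nonneg (fun j _ => by positivity)
    have hvk : (0 : ℝ) < (v (k + 1) : ℝ) := by exact_mod_cast hvpos (k + 1)
    have hLk : L k = C * ((∏ j ∈ Finset.range (k + 1), (a j : ℝ)) / t k) := by
      have h := hid k
      field_simp [hCdef, (htpos k).ne', ha0.ne']
      rw [hCdef, div_mul_eq_mul_div, eq_div_iff ha0.ne']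
      linear_combination hid k
    rw [hLk]
    have h1 : (∏ j ∈ Finset.range (k + 1), (a j : ℝ)) / t k ≤
        (∏ j ∈ Finset.range (k + 1), (a j : ℝ)) / (v (k + 1) : ℝ) :=
      div_le_div_of_nonneg_left hPa hvk (htge k)
    have h2 := hbound k
    exact mul_le_mul_of_nonneg_left (h1.trans h2) hCpos.le
  -- assume rational, derive contradiction
  by_contra hrat
  rw [Irrational] at hrat
  push_neg at hrat
  obtain ⟨r, hr⟩ := hrat
  have hd : (0 : ℝ) < (r.den : ℝ) := by exact_mod_cast r.pos
  have hnum : ((r.num : ℝ)) = (r.den : ℝ) * lam 0 := by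
    rw [← hr, Rat.cast_def]
    field_simp
  -- two-step induction: r.den * L k is an integer
  have hint : ∀ k, (∃ n : ℤ, (n : ℝ) = (r.den : ℝ) * L k) ∧
      (∃ n : ℤ, (n : ℝ) = (r.den : ℝ) * L (k + 1)) := by
    intro k
    induction k with
    | zero =>
      constructor
      · exact ⟨r.num, by simp [hLdef, hnum]⟩
      · refine ⟨(r.den : ℤ) * (a 0 : ℤ) - (b 0 : ℤ) * r.num, ?_⟩
        have hL1 : L 1 = lam 0 * lam 1 := by
          simp [hLdef, Finset.prod_range_succ]
        rw [hL1]
        push_cast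
        rw [hnum]
        linear_combination (-(r.den : ℝ)) * key 0
    | succ k ih =>
      obtain ⟨⟨n1, hn1⟩, ⟨n2, hn2⟩⟩ := ih
      refine ⟨⟨n2, hn2⟩, ⟨(a (k + 1) : ℤ) * n1 - (b (k + 1) : ℤ) * n2, ?_⟩⟩
      rw [hLsucc (k + 1), hLsucc k]
      push_cast
      rw [hn1, hn2, hLsucc k]
      linear_combination (-((r.den : ℝ) * L k)) * key (k + 1)
  have hlower : ∀ k, 1 / (r.den : ℝ) ≤ L k := by
    intro k
    obtain ⟨n, hn⟩ := (hint k).1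
    have hnpos : (0 : ℝ) < (n : ℝ) := by rw [hn]; exact mul_pos hd (hLpos k)
    have hn1 : (1 : ℝ) ≤ (n : ℝ) := by exact_mod_cast (by exact_mod_cast hnpos : (0:ℤ) < n)
    rw [div_le_iff₀ hd] at *
    nlinarith [hLpos k]
  -- contradiction via the limit
  have hCε : Filter.Tendsto (fun k => C * ε k) Filter.atTop (nhds 0) := by
    simpa using hε.const_mul C
  have hle : 1 / (r.den : ℝ) ≤ 0 :=
    ge_of_tendsto' hCε (fun k => (hlower k).trans (hupper k))
  have : (0 : ℝ) < 1 / (r.den : ℝ) := by positivity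
  linarith
end

section
/- Let χ be a character (group homomorphism to the circle group S¹) of the group Q_{(ℓ_p)} ⊆ ℚ (under addition), where ℓ_p ∈ {0,1,…} ∪ {∞} for each prime. Then there exist a unique θ ∈ [0,1) and unique z_p ∈ ℤ_p (with 0 ≤ z_p < p^{ℓ_p} when ℓ_p < ∞) such that for all q ∈ Q_{(ℓ_p)}, χ(q) = exp(2πi(qθ + Σ_p {q z_p}_p)). -/
instance (p : Nat.Primes) : Fact (p : ℕ).Prime := ⟨p.property⟩

/-- The `(ℓ_p)`-subgroup `Q_{(ℓ_p)}` of `ℚ`: rationals whose denominator involves each prime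
`p` with exponent at most `ℓ_p`; it is generated by the `1/p^n`, `n ≤ ℓ_p`. -/
def Qgrp (ℓ : Nat.Primes → ℕ∞) : AddSubgroup ℚ :=
  AddSubgroup.closure
    {x : ℚ | ∃ (p : Nat.Primes) (n : ℕ), (n : ℕ∞) ≤ ℓ p ∧ x = 1 / ((p : ℕ) : ℚ) ^ n}

open Complex Real Filter

namespace Stmt14Aux

noncomputable def ee (x : ℝ) : ℂ := Complex.exp (2 * Real.pi * Complex.I * x)

lemma ee_add (x y : ℝ) : ee (x + y) = ee x * ee y := by
  rw [ee, ee, ee, ← Complex.exp_add]; push_cast; ring_nf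

lemma ee_zero : ee 0 = 1 := by simp [ee]

lemma ee_neg (x : ℝ) : ee (-x) = (ee x)⁻¹ := by
  rw [ee, ee, ← Complex.exp_neg]; push_cast; ring_nf

lemma ee_int (k : ℤ) : ee k = 1 := by
  rw [ee, Complex.exp_eq_one_iff]; exact ⟨k, by push_cast; ring⟩

lemma two_pi_I_ne : (2 * (Real.pi:ℂ) * Complex.I) ≠ 0 := by
  simp [Real.pi_ne_zero, Complex.I_ne_zero]

lemma ee_eq_ee_iff {x y : ℝ} : ee x = ee y ↔ ∃ k : ℤ, x - y = k := by
  rw [ee, ee, Complex.exp_eq_exp_iff_exists_int]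
  constructor
  · rintro ⟨n, h⟩
    refine ⟨n, ?_⟩
    have h1 : (2 * (Real.pi:ℂ) * Complex.I) * x = (2 * (Real.pi:ℂ) * Complex.I) * (y + n) := by
      rw [h]; ring
    have h2 := mul_left_cancel₀ two_pi_I_ne h1
    have h3 : ((x : ℝ) : ℂ) = ((y + n : ℝ) : ℂ) := by push_cast; exact_mod_cast h2
    have := Complex.ofReal_injective h3
    linarith [this]
  · rintro ⟨k, h⟩
    refine ⟨k, ?_⟩
    have h1 : (x:ℂ) = y + k := by
      have h2 : ((x : ℝ):ℂ) = ((y + k : ℝ):ℂ) := by rw [show (x:ℝ) = y + k by linarith]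
      push_cast at h2 ⊢; exact h2
    rw [h1]; ring

lemma ee_pow (n : ℕ) (x : ℝ) : ee x ^ n = ee (n * x) := by
  rw [ee, ee, ← Complex.exp_nat_mul]; congr 1; push_cast; ring

lemma pow_eq_one_ee {z : ℂ} {n : ℕ} (hn : n ≠ 0) (h : z ^ n = 1) :
    ∃ c : ℕ, c < n ∧ z = ee ((c : ℝ) / n) := by
  have : NeZero n := ⟨hn⟩
  obtain ⟨i, hi, hiz⟩ := (Complex.isPrimitiveRoot_exp n hn).eq_pow_of_pow_eq_one h
  refine ⟨i, hi, ?_⟩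
  rw [← hiz, ← Complex.exp_nat_mul, ee]
  congr 1
  have hn0 : (n:ℂ) ≠ 0 := by exact_mod_cast hn
  push_cast
  field_simp

lemma ee_cast (q S : ℚ) (t : ℝ) :
    Complex.exp (2 * (Real.pi : ℂ) * Complex.I * (((q:ℚ):ℂ) * ((t : ℝ) : ℂ) + ((S:ℚ):ℂ)))
      = ee ((q:ℝ) * t + ((S:ℚ):ℝ)) := by
  rw [ee]
  congr 1
  push_cast
  ring

lemma prime_norm_one (p r : Nat.Primes) (hpr : r ≠ p) :
    ‖(((p:ℕ):ℚ) : ℚ_[(r:ℕ)])‖ = 1 := by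
  have hle : ‖(((p:ℕ):ℚ) : ℚ_[(r:ℕ)])‖ ≤ 1 := by
    have := Padic.norm_int_le_one (p := (r:ℕ)) ((p:ℕ) : ℤ)
    push_cast at this ⊢
    exact this
  rcases lt_or_eq_of_le hle with hlt | heq
  · exfalso
    have h1 : ((r:ℕ) : ℤ) ∣ ((p:ℕ) : ℤ) := by
      rw [← Padic.norm_intCast_lt_one_iff]
      push_cast at hlt ⊢
      exact hlt
    have h2 : (r:ℕ) ∣ (p:ℕ) := by exact_mod_cast h1
    have := (Nat.prime_dvd_prime_iff_eq r.property p.property).mp h2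
    exact hpr (Subtype.ext this)
  · exact heq

lemma rat_int_of_norm_le_one (r : Nat.Primes) (y : ℚ) (m : ℤ) (k : ℕ)
    (hy : y = (m : ℚ) / ((r:ℕ):ℚ)^k) (hn : ‖((y : ℚ) : ℚ_[(r:ℕ)])‖ ≤ 1) :
    ∃ K : ℤ, y = (K : ℚ) := by
  subst hy
  have hr0 : (((r:ℕ):ℚ)) ≠ 0 := by exact_mod_cast r.property.pos.ne'
  have hr0R : (0:ℝ) < ((r:ℕ):ℝ)⁻¹ := by
    have : (0:ℝ) < ((r:ℕ):ℝ) := by exact_mod_cast r.property.pos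
    positivity
  have hcast : (((m : ℚ) / ((r:ℕ):ℚ)^k : ℚ) : ℚ_[(r:ℕ)])
      = (m : ℚ_[(r:ℕ)]) / ((r:ℕ) : ℚ_[(r:ℕ)])^k := by push_cast; ring
  rw [hcast, norm_div, norm_pow, Padic.norm_p,
    div_le_one (by positivity)] at hn
  have hdvd : (((r:ℕ):ℤ)^k) ∣ m := by
    rw [← Padic.norm_int_le_pow_iff_dvd]
    calc ‖(m : ℚ_[(r:ℕ)])‖ ≤ (((r:ℕ):ℝ)⁻¹)^k := hn
      _ = ((r:ℕ):ℝ)^(-(k:ℤ)) := by rw [zpow_neg, zpow_natCast, inv_pow]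
  obtain ⟨t, ht⟩ := hdvd
  refine ⟨t, ?_⟩
  rw [ht]
  push_cast
  field_simp

lemma sum_int (f : Nat.Primes →₀ ℚ) (h : ∀ r, ∃ K : ℤ, f r = (K:ℚ)) :
    ∃ K : ℤ, (f.sum fun _ y => y) = (K : ℚ) := by
  have hmem : (f.sum fun _ y => y) ∈ AddSubgroup.zmultiples (1:ℚ) := by
    rw [Finsupp.sum]
    apply AddSubgroup.sum_mem
    intro r _
    obtain ⟨K, hK⟩ := h r
    exact AddSubgroup.mem_zmultiples_iff.mpr ⟨K, by rw [zsmul_eq_mul, mul_one, hK]⟩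
  obtain ⟨K, hK⟩ := AddSubgroup.mem_zmultiples_iff.mp hmem
  exact ⟨K, by rw [← hK, zsmul_eq_mul, mul_one]⟩

lemma sum_split (f : Nat.Primes →₀ ℚ) (p : Nat.Primes)
    (h : ∀ r, r ≠ p → ∃ K : ℤ, f r = (K:ℚ)) :
    ∃ K : ℤ, (f.sum fun _ y => y) = f p + (K : ℚ) := by
  obtain ⟨K, hK⟩ := sum_int (f.erase p) (fun r => by
    by_cases hr : r = p
    · exact ⟨0, by simp [hr]⟩
    · obtain ⟨K, hK⟩ := h r hr
      exact ⟨K, by rw [Finsupp.erase_ne hr, hK]⟩)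
  refine ⟨K, ?_⟩
  conv_lhs => rw [← Finsupp.single_add_erase p f]
  rw [Finsupp.sum_add_index' (fun _ => rfl) (fun _ _ _ => rfl),
    Finsupp.sum_single_index rfl, hK]

lemma pinv_mono (p : Nat.Primes) {N n : ℕ} (h : N ≤ n) :
    ((p:ℕ):ℝ)^(-(n:ℤ)) ≤ ((p:ℕ):ℝ)^(-(N:ℤ)) := by
  apply zpow_le_zpow_right₀ (by exact_mod_cast p.property.one_lt.le)
  omega

lemma pinv_tendsto (p : Nat.Primes) :
    Tendsto (fun n : ℕ => ((p:ℕ):ℝ)^(-(n:ℤ))) atTop (nhds 0) := by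
  have hp1 : ((p:ℕ):ℝ)⁻¹ < 1 := by
    rw [inv_lt_one_iff₀]
    right
    exact_mod_cast p.property.one_lt
  have h := tendsto_pow_atTop_nhds_zero_of_lt_one
    (by positivity : (0:ℝ) ≤ ((p:ℕ):ℝ)⁻¹) hp1
  convert h using 2 with n
  rw [zpow_neg, inv_pow, zpow_natCast]

lemma z_ex (p : Nat.Primes) (L : ℕ∞) (c : ℕ → ℕ) (hclt : ∀ n, c n < (p:ℕ)^n)
    (hcompat : ∀ (n n' : ℕ), n ≤ n' → ((n':ℕ∞) ≤ L) → ((p:ℕ):ℤ)^n ∣ (c n' : ℤ) - (c n : ℤ)) :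
    ∃ z : ℤ_[(p:ℕ)],
      (∀ n : ℕ, (n:ℕ∞) ≤ L → ‖z - ((c n : ℤ) : ℤ_[(p:ℕ)])‖ ≤ ((p:ℕ):ℝ)^(-(n:ℤ))) ∧
      (∀ N : ℕ, L = (N:ℕ∞) → ∃ m : ℕ, m < (p:ℕ)^N ∧ z = (m : ℤ_[(p:ℕ)])) := by
  have hnorm_dvd : ∀ i j : ℕ, i ≤ j → ((j:ℕ∞) ≤ L) →
      ‖((c j : ℤ) : ℤ_[(p:ℕ)]) - ((c i : ℤ) : ℤ_[(p:ℕ)])‖ ≤ ((p:ℕ):ℝ)^(-(i:ℤ)) := by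
    intro i j hij hjL
    have h1 : (((c j : ℤ) - (c i : ℤ) : ℤ) : ℤ_[(p:ℕ)])
        = ((c j : ℤ) : ℤ_[(p:ℕ)]) - ((c i : ℤ) : ℤ_[(p:ℕ)]) := by push_cast; ring
    rw [← h1, PadicInt.norm_int_le_pow_iff_dvd]
    exact_mod_cast hcompat i j hij hjL
  cases L with
  | top =>
    set a : ℕ → ℤ_[(p:ℕ)] := fun n => ((c n : ℤ) : ℤ_[(p:ℕ)]) with ha
    have hcs : CauchySeq a := by
      refine cauchySeq_of_le_tendsto_0 (fun N => ((p:ℕ):ℝ)^(-(N:ℤ))) ?_ (pinv_tendsto p)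
      intro n m N hn hm
      rcases le_total n m with h | h
      · rw [dist_eq_norm, norm_sub_rev]
        exact le_trans (hnorm_dvd n m h le_top) (pinv_mono p hn)
      · rw [dist_eq_norm]
        exact le_trans (hnorm_dvd m n h le_top) (pinv_mono p hm)
    obtain ⟨z, hz⟩ := cauchySeq_tendsto_of_complete hcs
    refine ⟨z, fun n _ => ?_, fun N hN => by simp at hN⟩
    have htend : Tendsto (fun j => ‖a j - a n‖) atTop (nhds ‖z - a n‖) :=
      ((hz.sub tendsto_const_nhds).norm)
    apply le_of_tendsto htend
    filter_upwards [eventually_ge_atTop n] with j hj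
    exact hnorm_dvd n j hj le_top
  | coe N =>
    refine ⟨((c N : ℤ) : ℤ_[(p:ℕ)]), fun n hn => ?_, fun N' hN' => ?_⟩
    · have hnN : n ≤ N := by exact_mod_cast hn
      exact hnorm_dvd n N hnN le_rfl
    · have hNN : N = N' := by exact_mod_cast hN'
      subst hNN
      exact ⟨c N, hclt N, by push_cast; ring⟩

section
variable {ℓ : Nat.Primes → ℕ∞}

lemma memp (ℓ : Nat.Primes → ℕ∞) (p : Nat.Primes) (n : ℕ) (h : (n : ℕ∞) ≤ ℓ p) :
    1 / ((p : ℕ) : ℚ) ^ n ∈ Qgrp ℓ :=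
  AddSubgroup.subset_closure ⟨p, n, h, rfl⟩

lemma mem1 (ℓ : Nat.Primes → ℕ∞) : (1 : ℚ) ∈ Qgrp ℓ := by
  have := memp ℓ ⟨2, Nat.prime_two⟩ 0 (by simp)
  simpa using this

variable (χ : Qgrp ℓ → ℂ)
    (hmul : ∀ x y : Qgrp ℓ, χ (x + y) = χ x * χ y)
    (hnorm : ∀ x : Qgrp ℓ, ‖χ x‖ = 1)

include hnorm in
lemma chi_ne (x : Qgrp ℓ) : χ x ≠ 0 := by
  intro h; have := hnorm x; rw [h] at this; simp at this

include hmul hnorm in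
lemma chi_zero : χ 0 = 1 := by
  have h := hmul 0 0
  rw [add_zero] at h
  have := chi_ne χ hnorm 0
  field_simp at h
  tauto

include hmul hnorm in
lemma chi_nsmul (n : ℕ) (x : Qgrp ℓ) : χ (n • x) = χ x ^ n := by
  induction n with
  | zero => simpa using chi_zero χ hmul hnorm
  | succ k ih => rw [succ_nsmul, hmul, ih, pow_succ]

include hmul hnorm in
lemma chi_neg (x : Qgrp ℓ) : χ (-x) = (χ x)⁻¹ := by
  have h := hmul x (-x)
  rw [add_neg_cancel, chi_zero χ hmul hnorm] at h
  field_simp [chi_ne χ hnorm x] at h ⊢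
  exact h.symm

include hnorm in
lemma theta_ex : ∃ θ : ℝ, (0 ≤ θ ∧ θ < 1) ∧ χ ⟨1, mem1 ℓ⟩ = ee θ := by
  set z := χ ⟨1, mem1 ℓ⟩ with hz
  have habs : ‖z‖ = 1 := hnorm _
  refine ⟨Int.fract (z.arg / (2 * Real.pi)), ⟨Int.fract_nonneg _, Int.fract_lt_one _⟩, ?_⟩
  have h1 : z = Complex.exp (z.arg * Complex.I) := by
    conv_lhs => rw [← Complex.norm_mul_exp_arg_mul_I z]
    rw [habs, Complex.ofReal_one, one_mul]
  have hpi : (2 * Real.pi : ℝ) ≠ 0 := by positivity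
  have h2 : ee (z.arg / (2 * Real.pi)) = z := by
    rw [ee]
    have harg : (2 * (Real.pi:ℂ) * Complex.I) * ((z.arg / (2 * Real.pi) : ℝ):ℂ)
        = z.arg * Complex.I := by
      push_cast
      field_simp [Complex.ofReal_ne_zero.mpr Real.pi_ne_zero]
    rw [harg, ← h1]
  have h3 : ee (Int.fract (z.arg / (2 * Real.pi))) = ee (z.arg / (2 * Real.pi)) := by
    rw [ee_eq_ee_iff]
    exact ⟨-⌊z.arg / (2 * Real.pi)⌋, by rw [Int.fract]; push_cast; ring⟩
  rw [h3, h2]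

include hmul hnorm in
lemma c_ex (θ : ℝ) (hθ1 : χ ⟨1, mem1 ℓ⟩ = ee θ) (p : Nat.Primes) (n : ℕ) :
    ∃ c : ℕ, c < (p:ℕ)^n ∧
      ∀ h : (n:ℕ∞) ≤ ℓ p, χ ⟨1/((p:ℕ):ℚ)^n, memp ℓ p n h⟩
        = ee (θ/((p:ℕ):ℝ)^n + (c:ℝ)/((p:ℕ):ℝ)^n) := by
  by_cases h : (n:ℕ∞) ≤ ℓ p
  swap
  · exact ⟨0, pow_pos p.property.pos n, fun h' => absurd h' h⟩
  have hp0 : ((p:ℕ):ℚ) ≠ 0 := by exact_mod_cast p.property.pos.ne'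
  have hpr : ((p:ℕ):ℝ) ≠ 0 := by exact_mod_cast p.property.pos.ne'
  have hsm : ((p:ℕ)^n) • (⟨1/((p:ℕ):ℚ)^n, memp ℓ p n h⟩ : Qgrp ℓ) = ⟨1, mem1 ℓ⟩ := by
    ext
    rw [AddSubmonoidClass.coe_nsmul, nsmul_eq_mul]
    push_cast
    field_simp
  have hee : ee (-(θ/((p:ℕ):ℝ)^n)) ≠ 0 := by rw [ee]; exact Complex.exp_ne_zero _
  set w := χ ⟨1/((p:ℕ):ℚ)^n, memp ℓ p n h⟩ * ee (-(θ/((p:ℕ):ℝ)^n)) with hw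
  have hw1 : w ^ ((p:ℕ)^n) = 1 := by
    rw [hw, mul_pow, ee_pow, ← chi_nsmul χ hmul hnorm, hsm, hθ1]
    have harg : (((p:ℕ)^n : ℕ):ℝ) * -(θ/((p:ℕ):ℝ)^n) = -θ := by
      push_cast
      rw [mul_neg, neg_inj, mul_div_cancel₀]
      exact pow_ne_zero n hpr
    rw [harg, ee_neg, mul_inv_cancel₀ (by rw [ee]; exact Complex.exp_ne_zero _)]
  obtain ⟨c, hc, hwc⟩ := pow_eq_one_ee (pow_ne_zero n p.property.pos.ne') hw1
  refine ⟨c, hc, fun h' => ?_⟩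
  have := hwc
  rw [hw] at this
  have hx : χ ⟨1/((p:ℕ):ℚ)^n, memp ℓ p n h'⟩
      = ee ((c:ℝ) / ((p:ℕ)^n : ℕ)) * (ee (-(θ/((p:ℕ):ℝ)^n)))⁻¹ :=
    (eq_mul_inv_iff_mul_eq₀ hee).mpr this
  rw [hx, ee_neg, inv_inv, ee_add, mul_comm]
  congr 2
  push_cast
  ring

include hmul hnorm in
lemma compat (θ : ℝ) (c : Nat.Primes → ℕ → ℕ)
    (hc : ∀ (p : Nat.Primes) (n : ℕ) (h : (n:ℕ∞) ≤ ℓ p), χ ⟨1/((p:ℕ):ℚ)^n, memp ℓ p n h⟩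
        = ee (θ/((p:ℕ):ℝ)^n + ((c p n :ℕ):ℝ)/((p:ℕ):ℝ)^n))
    (p : Nat.Primes) (n n' : ℕ) (hnn : n ≤ n') (h' : (n':ℕ∞) ≤ ℓ p) :
    ((p:ℕ):ℤ)^n ∣ (c p n' : ℤ) - (c p n : ℤ) := by
  have h : (n:ℕ∞) ≤ ℓ p := le_trans (by exact_mod_cast hnn) h'
  have hp0 : ((p:ℕ):ℚ) ≠ 0 := by exact_mod_cast p.property.pos.ne'
  have hp0' : ((p:ℕ):ℝ) ≠ 0 := by exact_mod_cast p.property.pos.ne'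
  have hsm : ((p:ℕ)^(n'-n)) • (⟨1/((p:ℕ):ℚ)^n', memp ℓ p n' h'⟩ : Qgrp ℓ)
      = ⟨1/((p:ℕ):ℚ)^n, memp ℓ p n h⟩ := by
    ext
    rw [AddSubmonoidClass.coe_nsmul, nsmul_eq_mul]
    push_cast
    rw [mul_one_div, div_eq_div_iff (pow_ne_zero _ hp0) (pow_ne_zero _ hp0), one_mul, ← pow_add]
    congr 1
    omega
  have e1 : χ ⟨1/((p:ℕ):ℚ)^n, memp ℓ p n h⟩
      = ee ((((p:ℕ)^(n'-n) : ℕ):ℝ) * (θ/((p:ℕ):ℝ)^n' + ((c p n' :ℕ):ℝ)/((p:ℕ):ℝ)^n')) := by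
    rw [← hsm, chi_nsmul χ hmul hnorm, hc p n' h', ee_pow]
  have harg : (((p:ℕ)^(n'-n) : ℕ):ℝ) * (θ/((p:ℕ):ℝ)^n' + ((c p n' :ℕ):ℝ)/((p:ℕ):ℝ)^n')
      = θ/((p:ℕ):ℝ)^n + ((c p n' :ℕ):ℝ)/((p:ℕ):ℝ)^n := by
    have hkey : ((p:ℕ):ℝ)^(n'-n) * ((p:ℕ):ℝ)^n = ((p:ℕ):ℝ)^n' := by
      rw [← pow_add]; congr 1; omega
    push_cast
    rw [← add_div, ← add_div, ← hkey]
    rw [mul_div_assoc']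
    exact mul_div_mul_left _ _ (pow_ne_zero _ hp0')
  rw [harg, hc p n h] at e1
  rw [ee_eq_ee_iff] at e1
  obtain ⟨k, hk⟩ := e1
  have hk' : (((c p n :ℕ):ℝ) - ((c p n' :ℕ):ℝ))/((p:ℕ):ℝ)^n = k := by
    rw [← hk]; ring
  rw [div_eq_iff (pow_ne_zero _ hp0')] at hk'
  have hint : (c p n : ℤ) - (c p n' : ℤ) = k * ((p:ℕ):ℤ)^n := by exact_mod_cast hk'
  exact ⟨-k, by linarith [hint]⟩

include hmul hnorm in
theorem exists_f (θ : ℝ) (z : (p : Nat.Primes) → ℤ_[(p : ℕ)]) (c : Nat.Primes → ℕ → ℕ)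
    (hcval : ∀ (p : Nat.Primes) (n : ℕ) (h : (n:ℕ∞) ≤ ℓ p),
      χ ⟨1/((p:ℕ):ℚ)^n, memp ℓ p n h⟩ = ee (θ/((p:ℕ):ℝ)^n + ((c p n :ℕ):ℝ)/((p:ℕ):ℝ)^n))
    (hz1 : ∀ (p : Nat.Primes) (n : ℕ), (n:ℕ∞) ≤ ℓ p →
      ‖z p - ((c p n : ℤ) : ℤ_[(p:ℕ)])‖ ≤ ((p:ℕ):ℝ)^(-(n:ℤ)))
    (x : ℚ) (hx : x ∈ Qgrp ℓ) :
    ∃ f : Nat.Primes →₀ ℚ,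
      (∀ r : Nat.Primes, ∃ (m : ℤ) (k : ℕ), f r = (m : ℚ) / ((r : ℕ) : ℚ) ^ k) ∧
      (∀ r : Nat.Primes,
        ‖((x : ℚ) : ℚ_[(r : ℕ)]) * ((z r : ℤ_[(r:ℕ)]) : ℚ_[(r : ℕ)])
          - ((f r : ℚ) : ℚ_[(r : ℕ)])‖ ≤ 1) ∧
      χ ⟨x, hx⟩ = ee ((x:ℝ) * θ + ((f.sum fun _ y => y : ℚ) : ℝ)) := by
  have hzero := chi_zero χ hmul hnorm
  have hneg := chi_neg χ hmul hnorm
  induction hx using AddSubgroup.closure_induction with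
  | mem w hw =>
    obtain ⟨p, n, hn, rfl⟩ := hw
    refine ⟨Finsupp.single p ((c p n : ℚ) / ((p:ℕ):ℚ)^n), ?_, ?_, ?_⟩
    · intro r
      by_cases hrp : r = p
      · subst hrp
        exact ⟨c r n, n, by rw [Finsupp.single_eq_same]; push_cast; ring⟩
      · refine ⟨0, 0, ?_⟩
        rw [Finsupp.single_eq_of_ne' (fun hh => hrp hh.symm)]
        simp
    · intro r
      by_cases hrp : r = p
      · subst hrp
        rw [Finsupp.single_eq_same]
        have hrw : ((1/((r:ℕ):ℚ)^n : ℚ) : ℚ_[(r:ℕ)]) * ((z r : ℤ_[(r:ℕ)]) : ℚ_[(r:ℕ)])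
              - (((c r n : ℚ) / ((r:ℕ):ℚ)^n : ℚ) : ℚ_[(r:ℕ)])
            = (((z r - ((c r n : ℤ)) : ℤ_[(r:ℕ)])) : ℚ_[(r:ℕ)]) / ((r:ℕ) : ℚ_[(r:ℕ)])^n := by
          push_cast
          ring
        rw [hrw, norm_div, norm_pow, Padic.norm_p, PadicInt.padic_norm_e_of_padicInt]
        have h1 := hz1 r n hn
        have hp1 : (0:ℝ) < ((r:ℕ):ℝ) := by exact_mod_cast r.property.pos
        rw [div_le_one (by positivity)]
        calc ‖z r - ((c r n : ℤ) : ℤ_[(r:ℕ)])‖ ≤ ((r:ℕ):ℝ)^(-(n:ℤ)) := h1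
          _ = (((r:ℕ):ℝ)⁻¹)^n := by rw [zpow_neg, zpow_natCast, ← inv_pow]
      · rw [Finsupp.single_eq_of_ne' (fun hh => hrp hh.symm)]
        push_cast
        rw [sub_zero, norm_mul]
        have h2 : ‖((z r : ℤ_[(r:ℕ)]) : ℚ_[(r:ℕ)])‖ ≤ 1 := by
          rw [PadicInt.padic_norm_e_of_padicInt]; exact PadicInt.norm_le_one _
        have h1 : ‖(1 : ℚ_[(r:ℕ)]) / ((p:ℕ) : ℚ_[(r:ℕ)])^n‖ ≤ 1 := by
          rw [norm_div, norm_one, norm_pow]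
          have h3 := prime_norm_one p r hrp
          push_cast at h3
          rw [h3]
          simp
        have h3 := mul_le_mul h1 h2 (norm_nonneg _) zero_le_one
        simpa using h3
    · rw [hcval p n hn, Finsupp.sum_single_index rfl]
      congr 1
      push_cast
      ring
  | zero =>
    refine ⟨0, fun r => ⟨0, 0, by simp⟩, fun r => by simp, ?_⟩
    have h0 : (⟨(0:ℚ), (Qgrp ℓ).zero_mem⟩ : Qgrp ℓ) = 0 := rfl
    rw [h0, hzero]
    rw [show ((0:ℚ):ℝ) * θ + (((0 : Nat.Primes →₀ ℚ).sum fun _ y => y : ℚ) : ℝ) = 0 by simp]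
    exact ee_zero.symm
  | add a b ha hb iha ihb =>
    obtain ⟨f, hf1, hf2, hf3⟩ := iha
    obtain ⟨g, hg1, hg2, hg3⟩ := ihb
    refine ⟨f + g, ?_, ?_, ?_⟩
    · intro r
      obtain ⟨m, k, hm⟩ := hf1 r
      obtain ⟨m', k', hm'⟩ := hg1 r
      have hr0 : ((r:ℕ):ℚ) ≠ 0 := by exact_mod_cast r.property.pos.ne'
      refine ⟨m * (r:ℕ)^k' + m' * (r:ℕ)^k, k + k', ?_⟩
      rw [Finsupp.add_apply, hm, hm',
        div_add_div _ _ (pow_ne_zero k hr0) (pow_ne_zero k' hr0), ← pow_add]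
      push_cast
      ring
    · intro r
      have hrw : (((a+b : ℚ)) : ℚ_[(r:ℕ)]) * ((z r : ℤ_[(r:ℕ)]) : ℚ_[(r:ℕ)])
            - (((f+g) r : ℚ) : ℚ_[(r:ℕ)])
          = ((a : ℚ_[(r:ℕ)]) * ((z r : ℤ_[(r:ℕ)]) : ℚ_[(r:ℕ)]) - ((f r : ℚ) : ℚ_[(r:ℕ)]))
            + ((b : ℚ_[(r:ℕ)]) * ((z r : ℤ_[(r:ℕ)]) : ℚ_[(r:ℕ)]) - ((g r : ℚ) : ℚ_[(r:ℕ)])) := by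
        rw [Finsupp.add_apply]
        push_cast
        ring
      rw [hrw]
      exact le_trans (Padic.nonarchimedean _ _) (max_le (hf2 r) (hg2 r))
    · have hab : (⟨a + b, (Qgrp ℓ).add_mem ha hb⟩ : Qgrp ℓ) = ⟨a, ha⟩ + ⟨b, hb⟩ := rfl
      rw [hab, hmul, hf3, hg3, ← ee_add]
      congr 1
      rw [Finsupp.sum_add_index' (fun _ => rfl) (fun _ _ _ => rfl)]
      push_cast
      ring
  | neg a ha iha =>
    obtain ⟨f, hf1, hf2, hf3⟩ := iha
    refine ⟨-f, ?_, ?_, ?_⟩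
    · intro r
      obtain ⟨m, k, hm⟩ := hf1 r
      exact ⟨-m, k, by rw [Finsupp.neg_apply, hm]; push_cast; ring⟩
    · intro r
      have hrw : (((-a : ℚ)) : ℚ_[(r:ℕ)]) * ((z r : ℤ_[(r:ℕ)]) : ℚ_[(r:ℕ)])
            - (((-f) r : ℚ) : ℚ_[(r:ℕ)])
          = -((a : ℚ_[(r:ℕ)]) * ((z r : ℤ_[(r:ℕ)]) : ℚ_[(r:ℕ)]) - ((f r : ℚ) : ℚ_[(r:ℕ)])) := by
        rw [Finsupp.neg_apply]
        push_cast
        ring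
      rw [hrw, norm_neg]
      exact hf2 r
    · have hna : (⟨-a, (Qgrp ℓ).neg_mem ha⟩ : Qgrp ℓ) = -⟨a, ha⟩ := rfl
      rw [hna, hneg, hf3, ← ee_neg]
      congr 1
      have hsum : ((-f).sum fun _ y => y : ℚ) = -(f.sum fun _ y => y : ℚ) := by
        have := Finsupp.sum_sub_index (f := 0) (g := f) (h := fun (_ : Nat.Primes) (y : ℚ) => y)
          (fun _ _ _ => rfl)
        simpa using this
      rw [hsum]
      push_cast
      ring

end
end Stmt14Aux

open Stmt14Aux in
set_option maxHeartbeats 1000000 in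
/-- Every character `χ` of `Q_{(ℓ_p)}` has the form
`χ(q) = exp(2πi(qθ + Σ_p {q z_p}_p))` for a unique `θ ∈ [0,1)` and unique `z_p ∈ ℤ_p`
(with `0 ≤ z_p < p^{ℓ_p}` when `ℓ_p < ∞`). The fractional parts are encoded by a finitely
supported family `f` of rationals with `p`-power denominators with `q z_p − f_p ∈ ℤ_p`. -/
theorem stmt14 (ℓ : Nat.Primes → ℕ∞) (χ : Qgrp ℓ → ℂ)
    (hmul : ∀ x y : Qgrp ℓ, χ (x + y) = χ x * χ y)
    (hnorm : ∀ x : Qgrp ℓ, ‖χ x‖ = 1) :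
    ∃! θz : ℝ × ((p : Nat.Primes) → ℤ_[(p : ℕ)]),
      (0 ≤ θz.1 ∧ θz.1 < 1) ∧
      (∀ p : Nat.Primes, ∀ n : ℕ, ℓ p = (n : ℕ∞) →
        ∃ m : ℕ, m < (p : ℕ) ^ n ∧ θz.2 p = (m : ℤ_[(p : ℕ)])) ∧
      (∀ q : Qgrp ℓ, ∃ f : Nat.Primes →₀ ℚ,
        (∀ p : Nat.Primes, ∃ (m : ℤ) (n : ℕ), f p = (m : ℚ) / ((p : ℕ) : ℚ) ^ n) ∧
        (∀ p : Nat.Primes,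
          ‖((q : ℚ) : ℚ_[(p : ℕ)]) * ((θz.2 p : ℤ_[(p : ℕ)]) : ℚ_[(p : ℕ)]) -
            ((f p : ℚ) : ℚ_[(p : ℕ)])‖ ≤ 1) ∧
        χ q = Complex.exp (2 * (Real.pi : ℂ) * Complex.I *
          (((q : ℚ) : ℂ) * ((θz.1 : ℝ) : ℂ) + ((f.sum fun _ x => x : ℚ) : ℂ)))) := by
  classical
  obtain ⟨θ, ⟨hθ0, hθ1⟩, hθval⟩ := theta_ex χ hnorm
  choose c hclt hcval using c_ex χ hmul hnorm θ hθval
  have hcompat := compat χ hmul hnorm θ c hcval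
  have hzex := fun p => z_ex p (ℓ p) (c p) (hclt p) (fun n n' h h' => hcompat p n n' h h')
  choose z hz1 hz2 using hzex
  refine ⟨(θ, z), ⟨⟨hθ0, hθ1⟩, fun p n hn => hz2 p n hn, ?_⟩, ?_⟩
  · rintro ⟨x, hx⟩
    obtain ⟨f, h1, h2, h3⟩ := exists_f χ hmul hnorm θ z c hcval hz1 x hx
    refine ⟨f, h1, h2, ?_⟩
    rw [ee_cast]
    exact h3
  · rintro ⟨θ', z'⟩ ⟨⟨hb0, hb1⟩, hc2, hc3⟩
    have hθeq : θ' = θ := by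
      obtain ⟨f, hden, hnc, hval⟩ := hc3 ⟨1, mem1 ℓ⟩
      have hfr : ∀ r, ∃ K : ℤ, f r = (K:ℚ) := by
        intro r
        obtain ⟨m, k, hm⟩ := hden r
        apply rat_int_of_norm_le_one r _ m k hm
        have h1 := hnc r
        have hco : ((((⟨1, mem1 ℓ⟩ : Qgrp ℓ) : ℚ)) : ℚ_[(r:ℕ)]) = 1 := by norm_num
        rw [hco, one_mul] at h1
        have hzn : ‖((z' r : ℤ_[(r:ℕ)]) : ℚ_[(r:ℕ)])‖ ≤ 1 := by
          rw [PadicInt.padic_norm_e_of_padicInt]; exact PadicInt.norm_le_one _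
        have hrw : ((f r : ℚ) : ℚ_[(r:ℕ)])
            = ((z' r : ℤ_[(r:ℕ)]) : ℚ_[(r:ℕ)])
              + -(((z' r : ℤ_[(r:ℕ)]) : ℚ_[(r:ℕ)]) - ((f r : ℚ) : ℚ_[(r:ℕ)])) := by ring
        rw [hrw]
        exact le_trans (Padic.nonarchimedean _ _)
          (max_le hzn (by rw [norm_neg]; exact h1))
      obtain ⟨K, hK⟩ := sum_int f hfr
      rw [hK] at hval
      have hval2 : ee θ = ee ((((⟨1, mem1 ℓ⟩ : Qgrp ℓ) : ℚ):ℝ) * θ' + ((K:ℚ):ℝ)) := by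
        rw [← hθval, hval, ee_cast]
      rw [ee_eq_ee_iff] at hval2
      obtain ⟨k, hk⟩ := hval2
      have hco2 : (((⟨1, mem1 ℓ⟩ : Qgrp ℓ) : ℚ):ℝ) = 1 := by norm_num
      rw [hco2] at hk
      push_cast at hk
      have hint : k + K = 0 := by
        have hlt1 : ((k + K : ℤ):ℝ) < 1 := by push_cast; linarith
        have hgt : (-1:ℝ) < ((k + K : ℤ):ℝ) := by push_cast; linarith
        have h1 : (k + K : ℤ) < 1 := by exact_mod_cast hlt1
        have h2 : (-1 : ℤ) < (k + K : ℤ) := by exact_mod_cast hgt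
        omega
      have hC : ((k:ℝ) + K) = 0 := by exact_mod_cast hint
      linarith
    subst hθeq
    have hkey : ∀ (p : Nat.Primes) (n : ℕ), (n:ℕ∞) ≤ ℓ p →
        ‖z' p - z p‖ ≤ ((p:ℕ):ℝ)^(-(n:ℤ)) := by
      intro p n hn
      have hp1 : (0:ℝ) < ((p:ℕ):ℝ) := by exact_mod_cast p.property.pos
      obtain ⟨f, hden, hnc, hval⟩ := hc3 ⟨1/((p:ℕ):ℚ)^n, memp ℓ p n hn⟩
      have hco : (((⟨1/((p:ℕ):ℚ)^n, memp ℓ p n hn⟩ : Qgrp ℓ) : ℚ)) = 1/((p:ℕ):ℚ)^n := rfl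
      have hfr : ∀ r, r ≠ p → ∃ K : ℤ, f r = (K:ℚ) := by
        intro r hr
        obtain ⟨m, k, hm⟩ := hden r
        apply rat_int_of_norm_le_one r _ m k hm
        have h1 := hnc r
        rw [hco] at h1
        have hxn : ‖((1/((p:ℕ):ℚ)^n : ℚ) : ℚ_[(r:ℕ)]) * ((z' r : ℤ_[(r:ℕ)]) : ℚ_[(r:ℕ)])‖ ≤ 1 := by
          rw [norm_mul]
          have ha : ‖((1/((p:ℕ):ℚ)^n : ℚ) : ℚ_[(r:ℕ)])‖ = 1 := by
            have hcc : ((1/((p:ℕ):ℚ)^n : ℚ) : ℚ_[(r:ℕ)])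
                = 1 / ((((p:ℕ):ℚ)) : ℚ_[(r:ℕ)])^n := by push_cast; ring
            rw [hcc, norm_div, norm_one, norm_pow, prime_norm_one p r hr]
            simp
          have hb : ‖((z' r : ℤ_[(r:ℕ)]) : ℚ_[(r:ℕ)])‖ ≤ 1 := by
            rw [PadicInt.padic_norm_e_of_padicInt]; exact PadicInt.norm_le_one _
          rw [ha, one_mul]; exact hb
        have hrw : ((f r : ℚ) : ℚ_[(r:ℕ)])
            = ((1/((p:ℕ):ℚ)^n : ℚ) : ℚ_[(r:ℕ)]) * ((z' r : ℤ_[(r:ℕ)]) : ℚ_[(r:ℕ)])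
              + -(((1/((p:ℕ):ℚ)^n : ℚ) : ℚ_[(r:ℕ)]) * ((z' r : ℤ_[(r:ℕ)]) : ℚ_[(r:ℕ)])
                - ((f r : ℚ) : ℚ_[(r:ℕ)])) := by ring
        rw [hrw]
        exact le_trans (Padic.nonarchimedean _ _)
          (max_le hxn (by rw [norm_neg]; exact h1))
      obtain ⟨K, hK⟩ := sum_split f p hfr
      rw [hK] at hval
      have e2 := hval.trans (ee_cast _ (f p + K) θ')
      have e3 := (hcval p n hn).symm.trans e2
      rw [ee_eq_ee_iff] at e3
      obtain ⟨k, hk⟩ := e3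
      rw [hco] at hk
      push_cast at hk
      -- derive f p as rational
      have hfpR : ((f p : ℚ) : ℝ)
          = ((c p n : ℚ) : ℝ)/((p:ℕ):ℝ)^n - (((k + K : ℤ):ℚ):ℝ) := by
        push_cast
        ring_nf
        ring_nf at hk
        linarith
      have hfpq : (f p : ℚ) = (c p n : ℚ)/((p:ℕ):ℚ)^n - ((k + K :ℤ):ℚ) := by
        exact_mod_cast hfpR
      have h2p := hnc p
      rw [hco, hfpq] at h2p
      have hcast : (((c p n : ℚ)/((p:ℕ):ℚ)^n - ((k + K :ℤ):ℚ) : ℚ) : ℚ_[(p:ℕ)])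
          = ((c p n : ℤ) : ℚ_[(p:ℕ)])/((p:ℕ) : ℚ_[(p:ℕ)])^n - ((k + K : ℤ) : ℚ_[(p:ℕ)]) := by
        push_cast; ring
      have hc1 : ((1/((p:ℕ):ℚ)^n : ℚ) : ℚ_[(p:ℕ)]) = 1/((p:ℕ) : ℚ_[(p:ℕ)])^n := by
        push_cast; ring
      rw [hcast, hc1] at h2p
      have hT : ‖((k + K : ℤ) : ℚ_[(p:ℕ)])‖ ≤ 1 := Padic.norm_int_le_one _
      have hstep : ‖(((z' p : ℤ_[(p:ℕ)]) : ℚ_[(p:ℕ)]) - ((c p n : ℤ) : ℚ_[(p:ℕ)]))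
          /((p:ℕ) : ℚ_[(p:ℕ)])^n‖ ≤ 1 := by
        have hrw : (((z' p : ℤ_[(p:ℕ)]) : ℚ_[(p:ℕ)]) - ((c p n : ℤ) : ℚ_[(p:ℕ)]))
              /((p:ℕ) : ℚ_[(p:ℕ)])^n
            = (1/((p:ℕ) : ℚ_[(p:ℕ)])^n * ((z' p : ℤ_[(p:ℕ)]) : ℚ_[(p:ℕ)])
                - (((c p n : ℤ) : ℚ_[(p:ℕ)])/((p:ℕ) : ℚ_[(p:ℕ)])^n - ((k + K : ℤ) : ℚ_[(p:ℕ)])))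
              + -((k + K : ℤ) : ℚ_[(p:ℕ)]) := by ring
        rw [hrw]
        exact le_trans (Padic.nonarchimedean _ _)
          (max_le h2p (by rw [norm_neg]; exact hT))
      rw [norm_div, norm_pow, Padic.norm_p,
        div_le_one (pow_pos (inv_pos.mpr hp1) n)] at hstep
      have hz'c : ‖z' p - ((c p n : ℤ) : ℤ_[(p:ℕ)])‖ ≤ ((p:ℕ):ℝ)^(-(n:ℤ)) := by
        rw [← PadicInt.padic_norm_e_of_padicInt]
        have hcst : ((z' p - ((c p n : ℤ)) : ℤ_[(p:ℕ)]) : ℚ_[(p:ℕ)])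
            = ((z' p : ℤ_[(p:ℕ)]) : ℚ_[(p:ℕ)]) - ((c p n : ℤ) : ℚ_[(p:ℕ)]) := by
          push_cast; ring
        rw [hcst]
        calc ‖((z' p : ℤ_[(p:ℕ)]) : ℚ_[(p:ℕ)]) - ((c p n : ℤ) : ℚ_[(p:ℕ)])‖
            ≤ (((p:ℕ):ℝ)⁻¹)^n := hstep
          _ = ((p:ℕ):ℝ)^(-(n:ℤ)) := by rw [zpow_neg, zpow_natCast, inv_pow]
      have hfinal : z' p - z p
          = (z' p - ((c p n : ℤ):ℤ_[(p:ℕ)])) + -(z p - ((c p n : ℤ):ℤ_[(p:ℕ)])) := by ring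
      rw [hfinal]
      exact le_trans (PadicInt.nonarchimedean _ _)
        (max_le hz'c (by rw [norm_neg]; exact hz1 p n hn))
    have hzz : z' = z := by
      funext p
      cases hLp : ℓ p with
      | top =>
        have h0 : ∀ n : ℕ, ‖z' p - z p‖ ≤ ((p:ℕ):ℝ)^(-(n:ℤ)) :=
          fun n => hkey p n (by rw [hLp]; exact le_top)
        have hle := ge_of_tendsto' (pinv_tendsto p) h0
        have hn0 : ‖z' p - z p‖ = 0 := le_antisymm hle (norm_nonneg _)
        exact sub_eq_zero.mp (norm_eq_zero.mp hn0)
      | coe N =>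
        obtain ⟨m', hm', hzm'⟩ := hc2 p N hLp
        have hzm'' : z' p = (m' : ℤ_[(p:ℕ)]) := hzm'
        obtain ⟨m, hm, hzm⟩ := hz2 p N hLp
        have hd : (((p:ℕ):ℤ)^N) ∣ ((m':ℤ) - m) := by
          rw [← PadicInt.norm_int_le_pow_iff_dvd]
          have hcst : (((m' : ℤ) - m : ℤ) : ℤ_[(p:ℕ)]) = z' p - z p := by
            rw [hzm, hzm'']; push_cast; ring
          rw [hcst]
          exact hkey p N (le_of_eq hLp.symm)
        have hlt : ((m':ℤ) - m).natAbs < ((((p:ℕ):ℤ))^N).natAbs := by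
          rw [Int.natAbs_pow, Int.natAbs_natCast]
          omega
        have hz0 : (m':ℤ) - m = 0 := Int.eq_zero_of_dvd_of_natAbs_lt_natAbs hd hlt
        have : m' = m := by omega
        rw [hzm'', hzm, this]
    rw [hzz]
end

section
/- Let ℓ_p ∈ {0,1,…} ∪ {∞} for each prime p. Then the Pontryagin dual of the discrete torsion group Q_{(ℓ_p)}/ℤ, equipped with the dynamics of multiplication by the identity character (i.e., χ ↦ χ·ι where ι(x+ℤ) = exp(2πix)), is isomorphic as a topological dynamical system to the odometer lim← ℤ/(Π_{p ≤ k} p^{min(k,ℓ_p)})ℤ with the +1 map. -/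
/-- The group `ℚ/ℤ`. -/
abbrev RatModInt : Type := ℚ ⧸ AddSubgroup.zmultiples (1 : ℚ)

/-- The quotient map `ℚ → ℚ/ℤ`. -/
def toQZ : ℚ →+ RatModInt := QuotientAddGroup.mk' _

/-- The subgroup `Q_{(ℓ_p)}/ℤ` of `ℚ/ℤ`. -/
def Bgrp (ℓ : Nat.Primes → ℕ∞) : AddSubgroup RatModInt := (Qgrp ℓ).map toQZ

/-- Characters of the discrete group `Q_{(ℓ_p)}/ℤ`, with the topology of pointwise
convergence. -/
abbrev CharSpace (ℓ : Nat.Primes → ℕ∞) : Type :=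
  {χ : Bgrp ℓ → ℂ // (∀ x y, χ (x + y) = χ x * χ y) ∧ ∀ x, ‖χ x‖ = 1}

instance (n : ℕ) : TopologicalSpace (ZMod n) := ⊥

/-- `Π_{p ≤ k} p^{min(k, ℓ_p)}`. -/
noncomputable def odoN (ℓ : Nat.Primes → ℕ∞) (k : ℕ) : ℕ :=
  ∏ p ∈ (Finset.range (k + 1)).subtype Nat.Prime, (p : ℕ) ^ (min (k : ℕ∞) (ℓ p)).toNat

/-- The odometer `lim← ℤ/(Π_{p ≤ k} p^{min(k,ℓ_p)})ℤ`. -/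
abbrev Odometer (ℓ : Nat.Primes → ℕ∞) : Type :=
  {f : ∀ k : ℕ, ZMod (odoN ℓ k) // ∀ k : ℕ, (((f (k + 1)).val : ℕ) : ZMod (odoN ℓ k)) = f k}

noncomputable def zeta (q : ℚ) : ℂ := Complex.exp (2 * (Real.pi : ℂ) * Complex.I * ((q : ℚ) : ℂ))

lemma zeta_add (x y : ℚ) : zeta (x + y) = zeta x * zeta y := by
  rw [zeta, zeta, zeta, ← Complex.exp_add]
  congr 1
  push_cast
  ring

lemma zeta_int (z : ℤ) : zeta (z : ℚ) = 1 := by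
  rw [zeta, Complex.exp_eq_one_iff]
  exact ⟨z, by push_cast; ring⟩

lemma zeta_ne_zero (q : ℚ) : zeta q ≠ 0 := Complex.exp_ne_zero _

lemma zeta_eq_iff {x y : ℚ} : zeta x = zeta y ↔ ∃ z : ℤ, x - y = z := by
  rw [zeta, zeta, Complex.exp_eq_exp_iff_exists_int]
  constructor
  · rintro ⟨n, h⟩
    refine ⟨n, ?_⟩
    have h2 : 2 * (Real.pi : ℂ) * Complex.I * (x : ℂ) =
        2 * (Real.pi : ℂ) * Complex.I * ((y : ℂ) + n) := by rw [h]; ring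
    have h3 := mul_left_cancel₀ Complex.two_pi_I_ne_zero h2
    have h4 : (x : ℂ) - (y : ℂ) = (n : ℂ) := by rw [h3]; ring
    exact_mod_cast h4
  · rintro ⟨z, h⟩
    refine ⟨z, ?_⟩
    have h4 : (x : ℂ) = (y : ℂ) + (z : ℂ) := by
      have : x = y + z := by linarith [h]
      exact_mod_cast this
    rw [h4]; ring

lemma zeta_abs (q : ℚ) : ‖zeta q‖ = 1 := by
  rw [zeta]
  have h : 2 * (Real.pi : ℂ) * Complex.I * ((q : ℚ) : ℂ) =
      ((2 * Real.pi * (q : ℝ) : ℝ) : ℂ) * Complex.I := by push_cast; ring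
  rw [h, Complex.norm_exp_ofReal_mul_I]

lemma zeta_pow (q : ℚ) (n : ℕ) : zeta q ^ n = zeta (n * q) := by
  rw [zeta, zeta, ← Complex.exp_nat_mul]
  congr 1
  push_cast
  ring

lemma zeta_zpow (q : ℚ) (m : ℤ) : zeta q ^ m = zeta (m * q) := by
  rw [zeta, zeta, ← Complex.exp_int_mul]
  congr 1
  push_cast
  ring

variable (ℓ : Nat.Primes → ℕ∞)

lemma odoN_pos (k : ℕ) : 0 < odoN ℓ k :=
  Finset.prod_pos (fun p _ => pow_pos p.2.pos _)

lemma odoN_dvd_succ (k : ℕ) : odoN ℓ k ∣ odoN ℓ (k + 1) := by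
  unfold odoN
  refine dvd_trans (Finset.prod_dvd_prod_of_dvd _
      (fun p : Nat.Primes => (p : ℕ) ^ (min ((k+1 : ℕ) : ℕ∞) (ℓ p)).toNat) ?_)
    (Finset.prod_dvd_prod_of_subset _ _ _ ?_)
  · intro p _
    apply pow_dvd_pow
    apply ENat.toNat_le_toNat
    · exact min_le_min (by exact_mod_cast Nat.le_succ k) le_rfl
    · exact ne_top_of_le_ne_top (ENat.coe_ne_top _) (min_le_left _ _)
  · intro p hp
    exact Finset.mem_subtype.mpr (Finset.mem_range.mpr (by
      have := Finset.mem_range.mp (Finset.mem_subtype.mp hp); omega))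

lemma odoN_dvd {k j : ℕ} (h : k ≤ j) : odoN ℓ k ∣ odoN ℓ j := by
  induction h with
  | refl => exact dvd_rfl
  | step _ ih => exact ih.trans (odoN_dvd_succ ℓ _)

lemma pow_dvd_odoN (p : Nat.Primes) (n : ℕ) (hn : (n : ℕ∞) ≤ ℓ p) :
    (p : ℕ) ^ n ∣ odoN ℓ (max (p : ℕ) n) := by
  set k := max (p : ℕ) n with hk
  have hp : p ∈ (Finset.range (k + 1)).subtype Nat.Prime :=
    Finset.mem_subtype.mpr (Finset.mem_range.mpr (by omega))
  refine dvd_trans (pow_dvd_pow _ ?_) (Finset.dvd_prod_of_mem _ hp)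
  have h1 : (n : ℕ∞) ≤ min (k : ℕ∞) (ℓ p) :=
    le_min (by exact_mod_cast le_max_right (p : ℕ) n) hn
  have := ENat.toNat_le_toNat h1 (ne_top_of_le_ne_top (ENat.coe_ne_top _) (min_le_left _ _))
  simpa using this

lemma odoN_ne_zero_q (k : ℕ) : ((odoN ℓ k : ℚ)) ≠ 0 := by
  exact_mod_cast (odoN_pos ℓ k).ne'

/-- lifting a fraction over `N k` to level `j`. -/
lemma div_odoN_lift {k j : ℕ} (h : k ≤ j) (m : ℤ) :
    (m : ℚ) / (odoN ℓ k : ℚ) =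
      ((m * (odoN ℓ j / odoN ℓ k : ℕ) : ℤ) : ℚ) / (odoN ℓ j : ℚ) := by
  have h1 : ((odoN ℓ j / odoN ℓ k : ℕ) : ℚ) * (odoN ℓ k : ℚ) = (odoN ℓ j : ℚ) := by
    rw [← Nat.cast_mul, Nat.div_mul_cancel (odoN_dvd ℓ h)]
  rw [div_eq_div_iff (odoN_ne_zero_q ℓ k) (odoN_ne_zero_q ℓ j), Int.cast_mul, Int.cast_natCast]
  linear_combination (-(m : ℚ)) * h1

lemma one_div_prod_mem (s : Finset Nat.Primes) (e : Nat.Primes → ℕ)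
    (he : ∀ p ∈ s, (e p : ℕ∞) ≤ ℓ p) :
    (1 / ((∏ p ∈ s, (p : ℕ) ^ (e p) : ℕ) : ℚ)) ∈ Qgrp ℓ := by
  classical
  induction s using Finset.induction with
  | empty =>
    have h1 : (1 : ℚ) ∈
        {x : ℚ | ∃ (p : Nat.Primes) (n : ℕ), (n : ℕ∞) ≤ ℓ p ∧ x = 1 / ((p : ℕ) : ℚ) ^ n} :=
      ⟨⟨2, Nat.prime_two⟩, 0, by simp, by norm_num⟩
    rw [Finset.prod_empty, Nat.cast_one, div_one]
    exact AddSubgroup.subset_closure h1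
  | @insert p s hps ih =>
    have hb : ∀ q ∈ s, (e q : ℕ∞) ≤ ℓ q := fun q hq => he q (Finset.mem_insert_of_mem hq)
    have ha : (e p : ℕ∞) ≤ ℓ p := he p (Finset.mem_insert_self _ _)
    set a : ℕ := (p : ℕ) ^ (e p) with hadef
    set b : ℕ := ∏ q ∈ s, (q : ℕ) ^ (e q) with hbdef
    have hco : Nat.Coprime a b := by
      apply Nat.Coprime.pow_left
      apply Nat.Coprime.prod_right
      intro q hq
      apply Nat.Coprime.pow_right
      exact (Nat.coprime_primes p.2 q.2).mpr (fun hpq => hps (by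
        cases p; cases q; simp_all))
    obtain ⟨u, v, huv⟩ := (Nat.isCoprime_iff_coprime.mpr hco)
    have ha0 : (a : ℚ) ≠ 0 := by
      have : 0 < a := pow_pos p.2.pos _
      exact_mod_cast this.ne'
    have hb0 : (b : ℚ) ≠ 0 := by
      have : 0 < b := Finset.prod_pos (fun q _ => pow_pos q.2.pos _)
      exact_mod_cast this.ne'
    have hmema : (1 / (a : ℚ)) ∈ Qgrp ℓ :=
      AddSubgroup.subset_closure ⟨p, e p, ha, by push_cast [hadef]; ring⟩
    have hmemb : (1 / (b : ℚ)) ∈ Qgrp ℓ := ih hb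
    have key : (1 / ((∏ q ∈ insert p s, (q : ℕ) ^ (e q) : ℕ) : ℚ))
        = u • (1 / (b : ℚ)) + v • (1 / (a : ℚ)) := by
      have huvq : (u : ℚ) * a + (v : ℚ) * b = 1 := by exact_mod_cast congrArg (fun z : ℤ => (z : ℚ)) huv
      rw [Finset.prod_insert hps, ← hadef, ← hbdef, zsmul_eq_mul, zsmul_eq_mul]
      have h2 : (u : ℚ) * (1 / b) + (v : ℚ) * (1 / a) = ((u : ℚ) * a + (v : ℚ) * b) / (a * b) := by
        rw [mul_one_div, mul_one_div, div_add_div _ _ hb0 ha0, mul_comm (b : ℚ) (a : ℚ)]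
        congr 1
        ring
      rw [h2, huvq, Nat.cast_mul]
    rw [key]
    exact AddSubgroup.add_mem _ (AddSubgroup.zsmul_mem _ hmemb u) (AddSubgroup.zsmul_mem _ hmema v)

lemma one_div_odoN_mem (k : ℕ) : (1 / (odoN ℓ k : ℚ)) ∈ Qgrp ℓ := by
  have h := one_div_prod_mem ℓ ((Finset.range (k + 1)).subtype Nat.Prime)
    (fun p => (min (k : ℕ∞) (ℓ p)).toNat) ?_
  · exact h
  · intro p _
    rw [ENat.coe_toNat (ne_top_of_le_ne_top (ENat.coe_ne_top _) (min_le_left _ _))]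
    exact min_le_right _ _

lemma mem_Qgrp_iff {q : ℚ} : q ∈ Qgrp ℓ ↔ ∃ (k : ℕ) (m : ℤ), q = (m : ℚ) / (odoN ℓ k : ℚ) := by
  constructor
  · intro hq
    refine AddSubgroup.closure_induction ?_ ?_ ?_ ?_ hq
    · rintro x ⟨p, n, hn, rfl⟩
      refine ⟨max (p : ℕ) n, ((odoN ℓ (max (p : ℕ) n) / (p : ℕ) ^ n : ℕ) : ℤ), ?_⟩
      have hd := pow_dvd_odoN ℓ p n hn
      have h1 : ((odoN ℓ (max (p : ℕ) n) / (p : ℕ) ^ n : ℕ) : ℚ) * ((p : ℕ) : ℚ) ^ n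
          = (odoN ℓ (max (p : ℕ) n) : ℚ) := by
        rw [← Nat.cast_pow, ← Nat.cast_mul, Nat.div_mul_cancel hd]
      have hp0 : (((p : ℕ) : ℚ)) ^ n ≠ 0 := by
        have : 0 < (p : ℕ) ^ n := pow_pos p.2.pos _
        exact_mod_cast this.ne'
      rw [Int.cast_natCast, div_eq_div_iff hp0 (odoN_ne_zero_q ℓ _), one_mul, ← h1]
    · exact ⟨0, 0, by simp⟩
    · rintro x y - - ⟨k1, m1, rfl⟩ ⟨k2, m2, rfl⟩
      refine ⟨max k1 k2, m1 * (odoN ℓ (max k1 k2) / odoN ℓ k1 : ℕ)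
        + m2 * (odoN ℓ (max k1 k2) / odoN ℓ k2 : ℕ), ?_⟩
      rw [div_odoN_lift ℓ (le_max_left k1 k2) m1, div_odoN_lift ℓ (le_max_right k1 k2) m2]
      rw [← add_div]
      push_cast
      rfl
    · rintro x - ⟨k, m, rfl⟩
      exact ⟨k, -m, by push_cast; ring⟩
  · rintro ⟨k, m, rfl⟩
    have : (m : ℚ) / (odoN ℓ k : ℚ) = m • (1 / (odoN ℓ k : ℚ)) := by
      rw [zsmul_eq_mul, mul_one_div]
    rw [this]
    exact AddSubgroup.zsmul_mem _ (one_div_odoN_mem ℓ k) m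

lemma toQZ_eq_iff {x y : ℚ} : toQZ x = toQZ y ↔ ∃ z : ℤ, x - y = z := by
  rw [toQZ, QuotientAddGroup.mk'_eq_mk']
  constructor
  · rintro ⟨z, hz, rfl⟩
    obtain ⟨n, rfl⟩ := AddSubgroup.mem_zmultiples_iff.mp hz
    exact ⟨-n, by simp⟩
  · rintro ⟨z, hz⟩
    refine ⟨y - x, AddSubgroup.mem_zmultiples_iff.mpr ⟨-z, by rw [zsmul_eq_mul, mul_one]; push_cast; linarith [hz]⟩, by ring⟩

lemma odo_val_congr (a : Odometer ℓ) {k j : ℕ} (h : k ≤ j) :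
    (odoN ℓ k : ℤ) ∣ ((a.1 j).val : ℤ) - ((a.1 k).val : ℤ) := by
  induction j, h using Nat.le_induction with
  | base => simp
  | succ j hj ih =>
    have h1 : ((a.1 (j + 1)).val : ZMod (odoN ℓ j)) = ((a.1 j).val : ZMod (odoN ℓ j)) := by
      haveI : NeZero (odoN ℓ j) := ⟨(odoN_pos ℓ j).ne'⟩
      rw [a.2 j, ZMod.natCast_val, ZMod.cast_id]
    have h2 : (odoN ℓ j : ℤ) ∣ ((a.1 j).val : ℤ) - ((a.1 (j + 1)).val : ℤ) :=
      ((ZMod.natCast_eq_natCast_iff _ _ _).mp h1).dvd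
    have h2' : (odoN ℓ j : ℤ) ∣ ((a.1 (j + 1)).val : ℤ) - ((a.1 j).val : ℤ) := by
      have := dvd_neg.mpr h2
      rwa [neg_sub] at this
    have h3 : (odoN ℓ k : ℤ) ∣ ((a.1 (j + 1)).val : ℤ) - ((a.1 j).val : ℤ) :=
      dvd_trans (Int.natCast_dvd_natCast.mpr (odoN_dvd ℓ hj)) h2'
    have h4 := dvd_add h3 ih
    rwa [sub_add_sub_cancel] at h4

noncomputable def gfun (a : Odometer ℓ) (k : ℕ) (m : ℤ) : ℂ :=
  zeta ((m : ℚ) * ((a.1 k).val : ℚ) / (odoN ℓ k : ℚ))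

lemma gfun_congr_m (a : Odometer ℓ) (k : ℕ) {m m' : ℤ} (h : (odoN ℓ k : ℤ) ∣ m - m') :
    gfun ℓ a k m = gfun ℓ a k m' := by
  obtain ⟨z, hz⟩ := h
  rw [gfun, gfun, zeta_eq_iff]
  refine ⟨z * (a.1 k).val, ?_⟩
  have hq : (m : ℚ) - m' = (odoN ℓ k : ℚ) * z := by exact_mod_cast congrArg (Int.cast : ℤ → ℚ) hz
  rw [div_sub_div_same, div_eq_iff (odoN_ne_zero_q ℓ k)]
  push_cast
  linear_combination ((a.1 k).val : ℚ) * hq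

lemma gfun_lift (a : Odometer ℓ) {k j : ℕ} (h : k ≤ j) (m : ℤ) :
    gfun ℓ a k m = gfun ℓ a j (m * (odoN ℓ j / odoN ℓ k : ℕ)) := by
  have hNk := odoN_ne_zero_q ℓ k
  have hNj := odoN_ne_zero_q ℓ j
  have hc : ((odoN ℓ j / odoN ℓ k : ℕ) : ℚ) * (odoN ℓ k : ℚ) = (odoN ℓ j : ℚ) := by
    rw [← Nat.cast_mul, Nat.div_mul_cancel (odoN_dvd ℓ h)]
  obtain ⟨z, hz⟩ := odo_val_congr ℓ a h
  have hvjq : ((a.1 j).val : ℚ) - ((a.1 k).val : ℚ) = (odoN ℓ k : ℚ) * z := by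
    exact_mod_cast congrArg (Int.cast : ℤ → ℚ) hz
  have hyx : ((m * (odoN ℓ j / odoN ℓ k : ℕ) : ℤ) : ℚ) * ((a.1 j).val : ℚ) / (odoN ℓ j : ℚ)
      = (m : ℚ) * ((a.1 j).val : ℚ) / (odoN ℓ k : ℚ) := by
    rw [div_eq_div_iff hNj hNk, Int.cast_mul, Int.cast_natCast]
    linear_combination (m : ℚ) * ((a.1 j).val : ℚ) * hc
  rw [gfun, gfun, hyx, zeta_eq_iff]
  refine ⟨-(m * z), ?_⟩
  rw [div_sub_div_same, div_eq_iff hNk]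
  push_cast
  linear_combination (-(m : ℚ)) * hvjq

lemma gfun_eq_of_toQZ_eq (a : Odometer ℓ) {k j : ℕ} {m m' : ℤ}
    (h : toQZ ((m : ℚ) / (odoN ℓ k : ℚ)) = toQZ ((m' : ℚ) / (odoN ℓ j : ℚ))) :
    gfun ℓ a k m = gfun ℓ a j m' := by
  rw [gfun_lift ℓ a (le_max_left k j) m, gfun_lift ℓ a (le_max_right k j) m']
  apply gfun_congr_m
  obtain ⟨z, hz⟩ := toQZ_eq_iff.mp h
  rw [div_odoN_lift ℓ (le_max_left k j) m, div_odoN_lift ℓ (le_max_right k j) m'] at hz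
  rw [div_sub_div_same, div_eq_iff (odoN_ne_zero_q ℓ (max k j))] at hz
  refine ⟨z, ?_⟩
  have h5 : ((m * (odoN ℓ (max k j) / odoN ℓ k : ℕ) - m' * (odoN ℓ (max k j) / odoN ℓ j : ℕ) : ℤ) : ℚ)
      = ((odoN ℓ (max k j) * z : ℤ) : ℚ) := by
    simp only [Int.cast_sub, Int.cast_mul, Int.cast_natCast] at hz ⊢
    linarith [hz]
  exact_mod_cast h5

lemma bgrp_rep_exists (b : Bgrp ℓ) :
    ∃ km : ℕ × ℤ, b.1 = toQZ ((km.2 : ℚ) / (odoN ℓ km.1 : ℚ)) := by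
  obtain ⟨q, hq, hb⟩ := b.2
  obtain ⟨k, m, rfl⟩ := (mem_Qgrp_iff ℓ).mp hq
  exact ⟨(k, m), hb.symm⟩

noncomputable def rep (b : Bgrp ℓ) : ℕ × ℤ := (bgrp_rep_exists ℓ b).choose

lemma rep_spec (b : Bgrp ℓ) :
    b.1 = toQZ (((rep ℓ b).2 : ℚ) / (odoN ℓ (rep ℓ b).1 : ℚ)) :=
  (bgrp_rep_exists ℓ b).choose_spec

noncomputable def psiRaw (a : Odometer ℓ) (b : Bgrp ℓ) : ℂ :=
  gfun ℓ a (rep ℓ b).1 (rep ℓ b).2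

lemma psiRaw_eval (a : Odometer ℓ) (b : Bgrp ℓ) (k : ℕ) (m : ℤ)
    (hb : b.1 = toQZ ((m : ℚ) / (odoN ℓ k : ℚ))) :
    psiRaw ℓ a b = gfun ℓ a k m :=
  gfun_eq_of_toQZ_eq ℓ a ((rep_spec ℓ b).symm.trans hb)

lemma psiRaw_add (a : Odometer ℓ) (x y : Bgrp ℓ) :
    psiRaw ℓ a (x + y) = psiRaw ℓ a x * psiRaw ℓ a y := by
  obtain ⟨⟨k1, m1⟩, hx⟩ := bgrp_rep_exists ℓ x
  obtain ⟨⟨k2, m2⟩, hy⟩ := bgrp_rep_exists ℓ y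
  set j := max k1 k2
  set c1 : ℕ := odoN ℓ j / odoN ℓ k1
  set c2 : ℕ := odoN ℓ j / odoN ℓ k2
  have hx' : x.1 = toQZ (((m1 * c1 : ℤ) : ℚ) / (odoN ℓ j : ℚ)) := by
    rw [hx, div_odoN_lift ℓ (le_max_left k1 k2) m1]
  have hy' : y.1 = toQZ (((m2 * c2 : ℤ) : ℚ) / (odoN ℓ j : ℚ)) := by
    rw [hy, div_odoN_lift ℓ (le_max_right k1 k2) m2]
  have hxy : (x + y).1 = toQZ (((m1 * c1 + m2 * c2 : ℤ) : ℚ) / (odoN ℓ j : ℚ)) := by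
    have : ((m1 * c1 + m2 * c2 : ℤ) : ℚ) / (odoN ℓ j : ℚ)
        = ((m1 * c1 : ℤ) : ℚ) / (odoN ℓ j : ℚ) + ((m2 * c2 : ℤ) : ℚ) / (odoN ℓ j : ℚ) := by
      rw [Int.cast_add, add_div]
    rw [this, map_add]
    show x.1 + y.1 = _
    rw [hx', hy']
  rw [psiRaw_eval ℓ a _ j _ hxy, psiRaw_eval ℓ a x j _ hx', psiRaw_eval ℓ a y j _ hy']
  rw [gfun, gfun, gfun]
  have harith : ((m1 * c1 + m2 * c2 : ℤ) : ℚ) * ((a.1 j).val : ℚ) / (odoN ℓ j : ℚ)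
      = ((m1 * c1 : ℤ) : ℚ) * ((a.1 j).val : ℚ) / (odoN ℓ j : ℚ)
        + ((m2 * c2 : ℤ) : ℚ) * ((a.1 j).val : ℚ) / (odoN ℓ j : ℚ) := by
    rw [Int.cast_add]
    ring
  rw [harith, zeta_add]

lemma psiRaw_abs (a : Odometer ℓ) (b : Bgrp ℓ) : ‖psiRaw ℓ a b‖ = 1 :=
  zeta_abs _

noncomputable def Psi (a : Odometer ℓ) : CharSpace ℓ :=
  ⟨psiRaw ℓ a, psiRaw_add ℓ a, psiRaw_abs ℓ a⟩

instance (n : ℕ) : DiscreteTopology (ZMod n) := ⟨rfl⟩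

lemma Psi_continuous : Continuous (Psi ℓ) := by
  apply Continuous.subtype_mk
  apply continuous_pi
  intro b
  show Continuous fun a : Odometer ℓ => gfun ℓ a (rep ℓ b).1 (rep ℓ b).2
  have : (fun a : Odometer ℓ => gfun ℓ a (rep ℓ b).1 (rep ℓ b).2)
      = (fun x : ZMod (odoN ℓ (rep ℓ b).1) =>
          zeta (((rep ℓ b).2 : ℚ) * (x.val : ℚ) / (odoN ℓ (rep ℓ b).1 : ℚ)))
        ∘ (fun a : Odometer ℓ => a.1 (rep ℓ b).1) := rfl
  rw [this]
  exact (continuous_of_discreteTopology).comp ((continuous_apply _).comp continuous_subtype_val)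

/-- the generator `1/N_k + ℤ` of level `k`. -/
noncomputable def xk (k : ℕ) : Bgrp ℓ :=
  ⟨toQZ ((1 : ℚ) / (odoN ℓ k : ℚ)),
    AddSubgroup.mem_map_of_mem toQZ (one_div_odoN_mem ℓ k)⟩

lemma xk_spec (k : ℕ) : (xk ℓ k).1 = toQZ (((1 : ℤ) : ℚ) / (odoN ℓ k : ℚ)) := by
  norm_num [xk]

lemma psiRaw_xk (a : Odometer ℓ) (k : ℕ) :
    psiRaw ℓ a (xk ℓ k) = zeta (((a.1 k).val : ℚ) / (odoN ℓ k : ℚ)) := by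
  rw [psiRaw_eval ℓ a _ k 1 (xk_spec ℓ k), gfun]
  norm_num

lemma zeta_val_inj {k : ℕ} {v w : ZMod (odoN ℓ k)}
    (h : zeta ((v.val : ℚ) / (odoN ℓ k : ℚ)) = zeta ((w.val : ℚ) / (odoN ℓ k : ℚ))) : v = w := by
  haveI : NeZero (odoN ℓ k) := ⟨(odoN_pos ℓ k).ne'⟩
  obtain ⟨z, hz⟩ := zeta_eq_iff.mp h
  rw [div_sub_div_same, div_eq_iff (odoN_ne_zero_q ℓ k)] at hz
  have hd : (odoN ℓ k : ℤ) ∣ (v.val : ℤ) - (w.val : ℤ) := by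
    refine ⟨z, ?_⟩
    have hq : ((v.val : ℚ) - (w.val : ℚ) : ℚ) = (odoN ℓ k : ℚ) * (z : ℚ) := by linarith [hz]
    exact_mod_cast hq
  have hmod : (v.val : ZMod (odoN ℓ k)) = (w.val : ZMod (odoN ℓ k)) := by
    rw [ZMod.natCast_eq_natCast_iff, Nat.modEq_iff_dvd]
    have := dvd_neg.mpr hd
    rwa [neg_sub] at this
  rw [ZMod.natCast_val, ZMod.cast_id, ZMod.natCast_val, ZMod.cast_id] at hmod
  exact hmod

lemma Psi_injective : Function.Injective (Psi ℓ) := by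
  intro a a' h
  have hval : ∀ k, a.1 k = a'.1 k := by
    intro k
    have := congrArg (fun χ : CharSpace ℓ => χ.1 (xk ℓ k)) h
    simp only [Psi] at this
    rw [psiRaw_xk, psiRaw_xk] at this
    exact zeta_val_inj ℓ this
  exact Subtype.ext (funext hval)

lemma chi_ne_zero (χ : CharSpace ℓ) (x : Bgrp ℓ) : χ.1 x ≠ 0 := by
  intro h0
  have h := χ.2.2 x
  rw [h0] at h
  simp at h

lemma chi_zero (χ : CharSpace ℓ) : χ.1 0 = 1 := by
  have h := χ.2.1 0 0
  rw [add_zero] at h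
  have h2 : χ.1 0 * 1 = χ.1 0 * χ.1 0 := by rw [mul_one]; exact h
  exact (mul_left_cancel₀ (chi_ne_zero ℓ χ 0) h2).symm

lemma chi_nsmul (χ : CharSpace ℓ) (x : Bgrp ℓ) (n : ℕ) : χ.1 (n • x) = χ.1 x ^ n := by
  induction n with
  | zero => rw [zero_nsmul, pow_zero]; exact chi_zero ℓ χ
  | succ n ih => rw [succ_nsmul, χ.2.1, ih, pow_succ]

lemma chi_neg (χ : CharSpace ℓ) (x : Bgrp ℓ) : χ.1 (-x) = (χ.1 x)⁻¹ := by
  have h := χ.2.1 x (-x)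
  rw [add_neg_cancel, chi_zero ℓ χ] at h
  exact eq_inv_of_mul_eq_one_right h.symm

lemma chi_zsmul (χ : CharSpace ℓ) (x : Bgrp ℓ) (m : ℤ) : χ.1 (m • x) = χ.1 x ^ m := by
  cases m with
  | ofNat n => rw [Int.ofNat_eq_natCast, natCast_zsmul, zpow_natCast, chi_nsmul]
  | negSucc n => rw [negSucc_zsmul, chi_neg, chi_nsmul, zpow_negSucc]

lemma odoN_smul_xk (k : ℕ) : (odoN ℓ k) • xk ℓ k = 0 := by
  apply Subtype.ext
  show (odoN ℓ k) • (toQZ ((1 : ℚ) / (odoN ℓ k : ℚ))) = 0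
  rw [← map_nsmul]
  have h1 : (odoN ℓ k) • ((1 : ℚ) / (odoN ℓ k : ℚ)) = 1 := by
    rw [nsmul_eq_mul, mul_one_div, div_self (odoN_ne_zero_q ℓ k)]
  rw [h1]
  have : toQZ (1 : ℚ) = toQZ (0 : ℚ) := by
    rw [toQZ_eq_iff]
    exact ⟨1, by norm_num⟩
  rw [this, map_zero]

lemma char_xk (χ : CharSpace ℓ) (k : ℕ) :
    ∃ i : ℕ, i < odoN ℓ k ∧ χ.1 (xk ℓ k) = zeta ((i : ℚ) / (odoN ℓ k : ℚ)) := by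
  haveI : NeZero (odoN ℓ k) := ⟨(odoN_pos ℓ k).ne'⟩
  have hpow : χ.1 (xk ℓ k) ^ (odoN ℓ k) = 1 := by
    rw [← chi_nsmul, odoN_smul_xk, chi_zero]
  obtain ⟨i, hi, hroot⟩ :=
    (Complex.isPrimitiveRoot_exp (odoN ℓ k) (odoN_pos ℓ k).ne').eq_pow_of_pow_eq_one hpow
  refine ⟨i, hi, ?_⟩
  rw [← hroot, ← Complex.exp_nat_mul, zeta]
  congr 1
  push_cast
  ring

lemma Psi_surjective : Function.Surjective (Psi ℓ) := by
  intro χ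
  choose i hilt hival using char_xk ℓ χ
  have hcompat : ∀ k, (odoN ℓ k : ℤ) ∣ (i (k + 1) : ℤ) - (i k : ℤ) := by
    intro k
    set c := odoN ℓ (k + 1) / odoN ℓ k with hcdef
    have hcmul : ((c : ℕ) : ℚ) * (odoN ℓ k : ℚ) = (odoN ℓ (k + 1) : ℚ) := by
      rw [← Nat.cast_mul, hcdef, Nat.div_mul_cancel (odoN_dvd ℓ (Nat.le_succ k))]
    have hxkc : xk ℓ k = c • xk ℓ (k + 1) := by
      apply Subtype.ext
      show toQZ ((1 : ℚ) / (odoN ℓ k : ℚ)) = c • toQZ ((1 : ℚ) / (odoN ℓ (k + 1) : ℚ))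
      rw [← map_nsmul]
      congr 1
      rw [nsmul_eq_mul, mul_one_div, div_eq_div_iff (odoN_ne_zero_q ℓ k) (odoN_ne_zero_q ℓ (k + 1)), one_mul]
      exact hcmul.symm
    have hval : χ.1 (xk ℓ k) = χ.1 (xk ℓ (k + 1)) ^ c := by
      rw [hxkc, chi_nsmul]
    rw [hival k, hival (k + 1), zeta_pow] at hval
    have harg : (c : ℚ) * ((i (k + 1) : ℚ) / (odoN ℓ (k + 1) : ℚ))
        = (i (k + 1) : ℚ) / (odoN ℓ k : ℚ) := by
      rw [mul_div_assoc', div_eq_div_iff (odoN_ne_zero_q ℓ (k + 1)) (odoN_ne_zero_q ℓ k)]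
      linear_combination (i (k + 1) : ℚ) * hcmul
    rw [harg] at hval
    obtain ⟨z, hz⟩ := zeta_eq_iff.mp hval
    rw [div_sub_div_same, div_eq_iff (odoN_ne_zero_q ℓ k)] at hz
    refine ⟨-z, ?_⟩
    have hq : ((i (k + 1) : ℚ) - (i k : ℚ)) = (odoN ℓ k : ℚ) * (-z : ℤ) := by
      push_cast
      linarith [hz]
    exact_mod_cast hq
  haveI : ∀ k, NeZero (odoN ℓ k) := fun k => ⟨(odoN_pos ℓ k).ne'⟩
  refine ⟨⟨fun k => ((i k : ℕ) : ZMod (odoN ℓ k)), ?_⟩, ?_⟩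
  · intro k
    rw [ZMod.val_natCast_of_lt (hilt (k + 1))]
    rw [ZMod.natCast_eq_natCast_iff, Nat.modEq_iff_dvd]
    have := dvd_neg.mpr (hcompat k)
    rwa [neg_sub] at this
  · apply Subtype.ext
    funext b
    obtain ⟨⟨k, m⟩, hb⟩ := bgrp_rep_exists ℓ b
    show psiRaw ℓ _ b = χ.1 b
    rw [psiRaw_eval ℓ _ b k m hb, gfun]
    have hbx : b = m • xk ℓ k := by
      apply Subtype.ext
      have hcoe : ((m • xk ℓ k : Bgrp ℓ) : RatModInt) = m • ((xk ℓ k : Bgrp ℓ) : RatModInt) := rfl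
      rw [hb, hcoe]
      show toQZ ((m : ℚ) / (odoN ℓ k : ℚ)) = m • toQZ ((1 : ℚ) / (odoN ℓ k : ℚ))
      rw [← map_zsmul]
      congr 1
      rw [zsmul_eq_mul, mul_one_div]
    rw [hbx, chi_zsmul, hival k, zeta_zpow]
    show zeta ((m : ℚ) * ((((i k : ℕ) : ZMod (odoN ℓ k)).val : ℕ) : ℚ) / (odoN ℓ k : ℚ)) = _
    rw [ZMod.val_natCast_of_lt (hilt k)]
    congr 1
    rw [mul_div_assoc]

lemma osucc_mem (a : Odometer ℓ) (k : ℕ) :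
    ((((a.1 (k + 1) + 1).val : ℕ)) : ZMod (odoN ℓ k)) = a.1 k + 1 := by
  haveI : NeZero (odoN ℓ (k + 1)) := ⟨(odoN_pos ℓ (k + 1)).ne'⟩
  have h1 : a.1 (k + 1) + 1 = ((((a.1 (k + 1)).val + 1 : ℕ)) : ZMod (odoN ℓ (k + 1))) := by
    rw [Nat.cast_add, Nat.cast_one, ZMod.natCast_val, ZMod.cast_id]
  rw [h1, ZMod.val_natCast]
  have h2 : (((a.1 (k + 1)).val + 1) % odoN ℓ (k + 1) : ℕ)
      ≡ ((a.1 (k + 1)).val + 1) [MOD odoN ℓ k] :=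
    (Nat.mod_modEq ((a.1 (k + 1)).val + 1) (odoN ℓ (k + 1))).of_dvd (odoN_dvd ℓ (Nat.le_succ k))
  rw [(ZMod.natCast_eq_natCast_iff _ _ _).mpr h2]
  rw [Nat.cast_add, Nat.cast_one, a.2 k]

noncomputable def osucc (a : Odometer ℓ) : Odometer ℓ :=
  ⟨fun k => a.1 k + 1, osucc_mem ℓ a⟩

lemma T_Psi (T : CharSpace ℓ → CharSpace ℓ)
    (hT : ∀ χ : CharSpace ℓ, ∀ (q : ℚ) (hq : q ∈ Qgrp ℓ),
      (T χ).1 ⟨toQZ q, AddSubgroup.mem_map_of_mem toQZ hq⟩ =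
        χ.1 ⟨toQZ q, AddSubgroup.mem_map_of_mem toQZ hq⟩ *
          Complex.exp (2 * (Real.pi : ℂ) * Complex.I * ((q : ℚ) : ℂ)))
    (a : Odometer ℓ) : T (Psi ℓ a) = Psi ℓ (osucc ℓ a) := by
  apply Subtype.ext
  funext b
  obtain ⟨q, hq, hqb⟩ := b.2
  have hb : b = ⟨toQZ q, AddSubgroup.mem_map_of_mem toQZ hq⟩ := Subtype.ext hqb.symm
  rw [hb, hT (Psi ℓ a) q hq]
  obtain ⟨k, m, rfl⟩ := (mem_Qgrp_iff ℓ).mp hq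
  show psiRaw ℓ a _ * Complex.exp _ = psiRaw ℓ (osucc ℓ a) _
  rw [psiRaw_eval ℓ a _ k m rfl, psiRaw_eval ℓ (osucc ℓ a) _ k m rfl]
  show gfun ℓ a k m * zeta ((m : ℚ) / (odoN ℓ k : ℚ)) = gfun ℓ (osucc ℓ a) k m
  rw [gfun, gfun, ← zeta_add]
  apply zeta_eq_iff.mpr
  haveI : NeZero (odoN ℓ k) := ⟨(odoN_pos ℓ k).ne'⟩
  have h1 : (osucc ℓ a).1 k = ((((a.1 k).val + 1 : ℕ)) : ZMod (odoN ℓ k)) := by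
    show a.1 k + 1 = _
    rw [Nat.cast_add, Nat.cast_one, ZMod.natCast_val, ZMod.cast_id]
  have hv'0 : ((osucc ℓ a).1 k).val = ((a.1 k).val + 1) % odoN ℓ k := by
    rw [h1, ZMod.val_natCast]
  have hdecomp : ((a.1 k).val + 1 : ℕ)
      = odoN ℓ k * (((a.1 k).val + 1) / odoN ℓ k) + ((osucc ℓ a).1 k).val := by
    rw [hv'0]
    exact (Nat.div_add_mod _ _).symm
  refine ⟨m * ((((a.1 k).val + 1) / odoN ℓ k : ℕ) : ℤ), ?_⟩
  have hdq : ((a.1 k).val : ℚ) + 1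
      = (odoN ℓ k : ℚ) * ((((a.1 k).val + 1) / odoN ℓ k : ℕ) : ℚ)
        + (((osucc ℓ a).1 k).val : ℚ) := by
    exact_mod_cast congrArg (fun t : ℕ => (t : ℚ)) hdecomp
  rw [← add_div, div_sub_div_same, div_eq_iff (odoN_ne_zero_q ℓ k), Int.cast_mul,
    Int.cast_natCast]
  linear_combination (m : ℚ) * hdq

/-- The dual of `Q_{(ℓ_p)}/ℤ` with the dynamics of multiplication by the identity character
`ι(q + ℤ) = exp(2πiq)` is topologically conjugate to the odometer
`lim← ℤ/(Π_{p ≤ k} p^{min(k,ℓ_p)})ℤ` with the `+1` map. -/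
theorem stmt16 (ℓ : Nat.Primes → ℕ∞) (T : CharSpace ℓ → CharSpace ℓ)
    (hT : ∀ χ : CharSpace ℓ, ∀ (q : ℚ) (hq : q ∈ Qgrp ℓ),
      (T χ).1 ⟨toQZ q, AddSubgroup.mem_map_of_mem toQZ hq⟩ =
        χ.1 ⟨toQZ q, AddSubgroup.mem_map_of_mem toQZ hq⟩ *
          Complex.exp (2 * (Real.pi : ℂ) * Complex.I * ((q : ℚ) : ℂ))) :
    ∃ Φ : CharSpace ℓ ≃ₜ Odometer ℓ,
      ∀ χ : CharSpace ℓ,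
        ((Φ (T χ) : Odometer ℓ) : ∀ k : ℕ, ZMod (odoN ℓ k)) =
          fun k => (Φ χ : Odometer ℓ).1 k + 1 := by
  haveI hcpt : ∀ k, CompactSpace (ZMod (odoN ℓ k)) := fun k => by
    haveI : NeZero (odoN ℓ k) := ⟨(odoN_pos ℓ k).ne'⟩
    exact Finite.compactSpace
  have hclosed : IsClosed {f : ∀ k : ℕ, ZMod (odoN ℓ k) |
      ∀ k : ℕ, (((f (k + 1)).val : ℕ) : ZMod (odoN ℓ k)) = f k} := by
    have heq : {f : ∀ k : ℕ, ZMod (odoN ℓ k) |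
        ∀ k : ℕ, (((f (k + 1)).val : ℕ) : ZMod (odoN ℓ k)) = f k}
        = ⋂ k : ℕ, {f : ∀ k : ℕ, ZMod (odoN ℓ k) |
            (((f (k + 1)).val : ℕ) : ZMod (odoN ℓ k)) = f k} := by
      ext f
      simp [Set.mem_iInter]
    rw [heq]
    refine isClosed_iInter fun k => isClosed_eq ?_ ?_
    · have hfe : (fun f : ∀ k : ℕ, ZMod (odoN ℓ k) => (((f (k + 1)).val : ℕ) : ZMod (odoN ℓ k)))
          = (fun x : ZMod (odoN ℓ (k + 1)) => ((x.val : ℕ) : ZMod (odoN ℓ k)))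
            ∘ (fun f : ∀ k : ℕ, ZMod (odoN ℓ k) => f (k + 1)) := rfl
      rw [hfe]
      exact continuous_of_discreteTopology.comp (continuous_apply (k + 1))
    · exact continuous_apply k
  haveI : CompactSpace (Odometer ℓ) := isCompact_iff_compactSpace.mp hclosed.isCompact
  let e : Odometer ℓ ≃ CharSpace ℓ :=
    Equiv.ofBijective (Psi ℓ) ⟨Psi_injective ℓ, Psi_surjective ℓ⟩
  have hce : Continuous e := Psi_continuous ℓ
  let H : Odometer ℓ ≃ₜ CharSpace ℓ := hce.homeoOfEquivCompactToT2
  refine ⟨H.symm, fun χ => ?_⟩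
  have hPsi : Psi ℓ (H.symm χ) = χ := e.apply_symm_apply χ
  have hTP : T χ = Psi ℓ (osucc ℓ (H.symm χ)) := by
    conv_lhs => rw [← hPsi]
    exact T_Psi ℓ T hT (H.symm χ)
  have h2 : H.symm (T χ) = osucc ℓ (H.symm χ) := by
    rw [hTP]
    exact e.symm_apply_apply (osucc ℓ (H.symm χ))
  rw [h2]
  rfl
end
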